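/- arXiv:1403.5428 — 12 statements merged into one kernel-verified Lean document; each statement's English description precedes it below -/
import Mathlib

section
/- (Theorem 3.1) Let f be semimultiplicative with f(x) ≠ 0 for all x ∈ P. Let T be a meet closed set of distinct elements of P, let x ∈ P \ T be such that no element of T is strictly above x, suppose S = T ∪ {x} is meet closed, and suppose Σ_{z ∈ S, z ≤ x} (1/f(z)) · μ_S(z, x) ≠ 0. Then the join matrix [S]_f is invertible if and only if the join matrix [T]_f is invertible. -/
open scoped Classical
open Finset

/-- The Möbius function of the finite subposet determined by a finite subset `S` of `P`
(the inverse of the zeta function in the incidence algebra of `S`), extended by `0`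
outside `S × S`. -/
noncomputable def mobiusS {P : Type*} [Lattice P] (S : Finset P) (a b : P) : ℂ :=
  letI : LocallyFiniteOrder ↥S := Fintype.toLocallyFiniteOrder
  if ha : a ∈ S then
    if hb : b ∈ S then IncidenceAlgebra.mu ℂ (⟨a, ha⟩ : ↥S) (⟨b, hb⟩ : ↥S) else 0
  else 0

lemma mu_irrel {A : Type*} (pr1 pr2 : Preorder A) (hpr : pr1 = pr2)
    (l1 : @LocallyFiniteOrder A pr1) (l2 : @LocallyFiniteOrder A pr2)
    (d1 d2 : DecidableEq A) (a b : A) :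
    @IncidenceAlgebra.mu ℂ A _ _ pr1 l1 d1 a b = @IncidenceAlgebra.mu ℂ A _ _ pr2 l2 d2 a b := by
  subst hpr
  have h1 : l1 = l2 := Subsingleton.elim _ _
  have h2 : d1 = d2 := Subsingleton.elim _ _
  subst h1; subst h2; rfl

lemma isUnit_matrix_irrel {n : Type*} [Fintype n] (d1 d2 : DecidableEq n) (M : Matrix n n ℂ) :
    @IsUnit (Matrix n n ℂ) (@MonoidWithZero.toMonoid _ (@Semiring.toMonoidWithZero _
        (@Matrix.semiring n ℂ Complex.instSemiring _ d1))) M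
      ↔ @IsUnit (Matrix n n ℂ) (@MonoidWithZero.toMonoid _ (@Semiring.toMonoidWithZero _
        (@Matrix.semiring n ℂ Complex.instSemiring _ d2))) M := by
  have h : d1 = d2 := Subsingleton.elim _ _
  subst h
  exact Iff.rfl

lemma mu_orderEmbedding {A B : Type*} [PartialOrder A] [PartialOrder B]
    [LocallyFiniteOrder A] [LocallyFiniteOrder B] [DecidableEq A] [DecidableEq B]
    (φ : A ↪o B)
    (hint : ∀ (a₁ a₂ : A) (b : B), φ a₁ ≤ b → b ≤ φ a₂ → ∃ a, φ a = b)
    (a₁ a₂ : A) : IncidenceAlgebra.mu ℂ (φ a₁) (φ a₂) = IncidenceAlgebra.mu ℂ a₁ a₂ := by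
  suffices h : ∀ n (a₂ : A), (Finset.Icc a₁ a₂).card = n →
      IncidenceAlgebra.mu ℂ (φ a₁) (φ a₂) = IncidenceAlgebra.mu ℂ a₁ a₂ from h _ a₂ rfl
  intro n
  induction n using Nat.strong_induction_on with
  | _ n ih =>
    intro a₂ hcard
    rw [IncidenceAlgebra.mu_apply, IncidenceAlgebra.mu_apply]
    by_cases hab : a₁ = a₂
    · subst hab; simp
    · rw [if_neg (fun h => hab (φ.injective h)), if_neg hab]
      congr 1
      have himg : Finset.Ico (φ a₁) (φ a₂) = (Finset.Ico a₁ a₂).image φ := by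
        ext b
        simp only [Finset.mem_Ico, Finset.mem_image]
        constructor
        · rintro ⟨h1, h2⟩
          obtain ⟨a, rfl⟩ := hint a₁ a₂ b h1 h2.le
          exact ⟨a, ⟨φ.le_iff_le.1 h1, φ.lt_iff_lt.1 h2⟩, rfl⟩
        · rintro ⟨a, ⟨h1, h2⟩, rfl⟩
          exact ⟨φ.monotone h1, φ.strictMono h2⟩
      rw [himg, Finset.sum_image (fun x _ y _ h => φ.injective h)]
      refine Finset.sum_congr rfl fun x hx => ?_
      rw [Finset.mem_Ico] at hx
      have hlt : (Finset.Icc a₁ x).card < n := by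
        rw [← hcard]
        exact Finset.card_lt_card
          (Finset.Icc_ssubset_Icc_right (hx.1.trans hx.2.le) le_rfl hx.2)
      exact ih _ hlt x rfl

noncomputable def PsiF {α : Type*} [Fintype α] [PartialOrder α] (g : α → ℂ) (x : α) : ℂ :=
  letI : LocallyFiniteOrder α := Fintype.toLocallyFiniteOrder
  ∑ z ∈ Finset.univ.filter (· ≤ x), g z * IncidenceAlgebra.mu ℂ z x

section AbstractMeet
variable {α : Type*} [Fintype α] [SemilatticeInf α]

lemma sum_le_PsiF (g : α → ℂ) (y : α) :
    ∑ z ∈ Finset.univ.filter (· ≤ y), PsiF g z = g y := by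
  letI : LocallyFiniteOrder α := Fintype.toLocallyFiniteOrder
  unfold PsiF
  have step : ∀ z ∈ Finset.univ.filter (· ≤ y),
      (∑ w ∈ Finset.univ.filter (· ≤ z), g w * IncidenceAlgebra.mu ℂ w z)
        = ∑ w ∈ Finset.univ.filter (· ≤ y), g w * IncidenceAlgebra.mu ℂ w z := by
    intro z hz
    rw [Finset.mem_filter] at hz
    refine Finset.sum_subset (fun w hw => ?_) (fun w _ hw => ?_)
    · rw [Finset.mem_filter] at hw ⊢
      exact ⟨Finset.mem_univ _, hw.2.trans hz.2⟩
    · rw [Finset.mem_filter, not_and] at hw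
      rw [IncidenceAlgebra.apply_eq_zero_of_not_le (fun hle => hw (Finset.mem_univ _) hle) _,
        mul_zero]
  rw [Finset.sum_congr rfl step, Finset.sum_comm]
  have inner : ∀ w ∈ Finset.univ.filter (· ≤ y),
      (∑ z ∈ Finset.univ.filter (· ≤ y), g w * IncidenceAlgebra.mu ℂ w z)
        = g w * (if w = y then 1 else 0) := by
    intro w hw
    rw [← Finset.mul_sum]
    congr 1
    rw [← IncidenceAlgebra.sum_Icc_mu_right w y]
    refine (Finset.sum_subset (fun z hz => ?_) (fun z _ hz => ?_)).symm
    · rw [Finset.mem_Icc] at hz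
      rw [Finset.mem_filter]; exact ⟨Finset.mem_univ _, hz.2⟩
    · rename_i hzf
      rw [Finset.mem_filter] at hzf
      rw [Finset.mem_Icc, not_and] at hz
      exact IncidenceAlgebra.apply_eq_zero_of_not_le (fun hle => hz hle hzf.2) _
  rw [Finset.sum_congr rfl inner]
  simp only [mul_ite, mul_one, mul_zero]
  rw [Finset.sum_ite_eq' (Finset.univ.filter (· ≤ y)) y g]
  rw [if_pos (by rw [Finset.mem_filter]; exact ⟨Finset.mem_univ _, le_rfl⟩)]

lemma isUnit_meet_iff (g : α → ℂ) :
    IsUnit (Matrix.of fun i j : α => g (i ⊓ j)) ↔ ∀ x : α, PsiF g x ≠ 0 := by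
  letI : LocallyFiniteOrder α := Fintype.toLocallyFiniteOrder
  set E : Matrix α α ℂ := Matrix.of fun i j => if j ≤ i then 1 else 0 with hE
  set M : Matrix α α ℂ := Matrix.of fun i j => IncidenceAlgebra.mu ℂ j i with hM
  have hEM : E * M = 1 := by
    ext i k
    rw [Matrix.mul_apply]
    simp only [hE, hM, Matrix.of_apply, ite_mul, one_mul, zero_mul]
    rw [Finset.sum_ite, Finset.sum_const_zero, add_zero]
    have : ∑ j ∈ Finset.univ.filter (· ≤ i), IncidenceAlgebra.mu ℂ k j
        = ∑ j ∈ Finset.Icc k i, IncidenceAlgebra.mu ℂ k j := by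
      refine (Finset.sum_subset (fun z hz => ?_) (fun z hz hz2 => ?_)).symm
      · rw [Finset.mem_Icc] at hz
        rw [Finset.mem_filter]; exact ⟨Finset.mem_univ _, hz.2⟩
      · rw [Finset.mem_filter] at hz
        rw [Finset.mem_Icc, not_and] at hz2
        exact IncidenceAlgebra.apply_eq_zero_of_not_le (fun hle => hz2 hle hz.2) _
    rw [this, IncidenceAlgebra.sum_Icc_mu_right]
    rw [Matrix.one_apply]
    simp [eq_comm]
  have hEunit : IsUnit E := by
    rw [Matrix.isUnit_iff_isUnit_det]
    have := congrArg Matrix.det hEM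
    rw [Matrix.det_mul, Matrix.det_one] at this
    exact IsUnit.of_mul_eq_one _ this
  have hfact : (Matrix.of fun i j : α => g (i ⊓ j))
      = E * Matrix.diagonal (PsiF g) * E.transpose := by
    ext i j
    rw [Matrix.mul_apply]
    have : ∀ k, (E * Matrix.diagonal (PsiF g)) i k * E.transpose k j
        = if k ≤ i ⊓ j then PsiF g k else 0 := by
      intro k
      rw [Matrix.mul_diagonal, Matrix.transpose_apply]
      simp only [hE, Matrix.of_apply]
      by_cases h1 : k ≤ i <;> by_cases h2 : k ≤ j <;>
        simp [h1, h2, le_inf_iff]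
    rw [Finset.sum_congr rfl fun k _ => this k]
    rw [Finset.sum_ite, Finset.sum_const_zero, add_zero]
    rw [Matrix.of_apply, ← sum_le_PsiF g (i ⊓ j)]
  rw [hfact]
  have hEtunit : IsUnit E.transpose := by
    rw [Matrix.isUnit_iff_isUnit_det, Matrix.det_transpose,
      ← Matrix.isUnit_iff_isUnit_det]
    exact hEunit
  rw [Matrix.isUnit_iff_isUnit_det, Matrix.det_mul, Matrix.det_mul]
  rw [Matrix.det_diagonal]
  rw [(Commute.all _ _).isUnit_mul_iff, (Commute.all _ _).isUnit_mul_iff]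
  simp only [← Matrix.isUnit_iff_isUnit_det, hEunit, hEtunit, true_and, and_true]
  rw [isUnit_iff_ne_zero, Finset.prod_ne_zero_iff]
  simp

end AbstractMeet

lemma aux_join_iff_psi {P : Type*} [Lattice P] (f : P → ℂ)
    (hsemi : ∀ a b : P, f a * f b = f (a ⊓ b) * f (a ⊔ b)) (hne : ∀ a : P, f a ≠ 0)
    {α : Type*} [Fintype α] [SemilatticeInf α] (σ : α → P)
    (hσinf : ∀ i j : α, σ (i ⊓ j) = σ i ⊓ σ j) :
    IsUnit (Matrix.of fun i j : α => f (σ i ⊔ σ j)) ↔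
      ∀ x : α, PsiF (fun i : α => (f (σ i))⁻¹) x ≠ 0 := by
  have hfact : (Matrix.of fun i j : α => f (σ i ⊔ σ j))
      = Matrix.diagonal (fun i : α => f (σ i)) *
        (Matrix.of fun i j : α => (fun k : α => (f (σ k))⁻¹) (i ⊓ j)) *
        Matrix.diagonal (fun i : α => f (σ i)) := by
    ext i j
    rw [Matrix.mul_diagonal, Matrix.diagonal_mul, Matrix.of_apply, Matrix.of_apply]
    simp only []
    rw [hσinf]
    have h := hsemi (σ i) (σ j)
    have h2 : f (σ i) * (f (σ i ⊓ σ j))⁻¹ * f (σ j)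
        = (f (σ i) * f (σ j)) * (f (σ i ⊓ σ j))⁻¹ := by ring
    rw [h2, h, mul_comm (f (σ i ⊓ σ j)), mul_assoc, mul_inv_cancel₀ (hne _), mul_one]
  rw [hfact]
  have hD : IsUnit (Matrix.diagonal (fun i : α => f (σ i))) := by
    rw [Matrix.isUnit_iff_isUnit_det, Matrix.det_diagonal, isUnit_iff_ne_zero,
      Finset.prod_ne_zero_iff]
    exact fun i _ => hne _
  rw [Matrix.isUnit_iff_isUnit_det, Matrix.det_mul, Matrix.det_mul,
    (Commute.all _ _).isUnit_mul_iff, (Commute.all _ _).isUnit_mul_iff]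
  simp only [← Matrix.isUnit_iff_isUnit_det, hD, true_and, and_true]
  have := isUnit_meet_iff (α := α) (fun k : α => (f (σ k))⁻¹)
  exact this

/-- Theorem 3.1: Let `f` be semimultiplicative with nonzero values on a lattice `P`
with finite principal order ideals. Let `T` be a meet closed finite set, let `p ∉ T` be such that
no element of `T` is strictly above `p`, suppose `S = T ∪ {p}` is meet closed, and suppose
`Σ_{z ∈ S, z ≤ p} (1/f(z)) · μ_S(z, p) ≠ 0`. Then the join matrix `[S]_f` is invertible iff
the join matrix `[T]_f` is invertible. -/
theorem joinMatrix_insert_isUnit_iff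
    {P : Type*} [Lattice P] (hfin : ∀ q : P, {y : P | y ≤ q}.Finite)
    (f : P → ℂ) (hsemi : ∀ a b : P, f a * f b = f (a ⊓ b) * f (a ⊔ b))
    (hne : ∀ a : P, f a ≠ 0)
    (T : Finset P) (hT : ∀ a ∈ T, ∀ b ∈ T, a ⊓ b ∈ T)
    (p : P) (hp : p ∉ T) (habove : ∀ t ∈ T, ¬ p < t)
    (hS : ∀ a ∈ insert p T, ∀ b ∈ insert p T, a ⊓ b ∈ insert p T)
    (hsum : ∑ z ∈ (insert p T).filter (fun z => z ≤ p),
        (1 / f z) * mobiusS (insert p T) z p ≠ 0) :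
    IsUnit (Matrix.of fun i j : ↥(insert p T) => f ((i : P) ⊔ (j : P))) ↔
      IsUnit (Matrix.of fun i j : ↥T => f ((i : P) ⊔ (j : P))) := by
  have hpS : p ∈ insert p T := Finset.mem_insert_self p T
  letI instT : SemilatticeInf ↥T :=
    { (inferInstance : PartialOrder ↥T) with
      inf := fun a b => ⟨(a : P) ⊓ (b : P), hT a a.2 b b.2⟩
      inf_le_left := fun a b => show ((a : P) ⊓ (b : P)) ≤ (a : P) from inf_le_left
      inf_le_right := fun a b => show ((a : P) ⊓ (b : P)) ≤ (b : P) from inf_le_right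
      le_inf := fun a b c hab hac =>
        show (a : P) ≤ (b : P) ⊓ (c : P) from le_inf hab hac }
  letI instS : SemilatticeInf ↥(insert p T) :=
    { (inferInstance : PartialOrder ↥(insert p T)) with
      inf := fun a b => ⟨(a : P) ⊓ (b : P), hS a a.2 b b.2⟩
      inf_le_left := fun a b => show ((a : P) ⊓ (b : P)) ≤ (a : P) from inf_le_left
      inf_le_right := fun a b => show ((a : P) ⊓ (b : P)) ≤ (b : P) from inf_le_right
      le_inf := fun a b c hab hac =>
        show (a : P) ≤ (b : P) ⊓ (c : P) from le_inf hab hac }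
  letI lT : LocallyFiniteOrder ↥T := Fintype.toLocallyFiniteOrder
  letI lS : LocallyFiniteOrder ↥(insert p T) := Fintype.toLocallyFiniteOrder
  -- the order embedding
  let φ : ↥T ↪o ↥(insert p T) :=
    OrderEmbedding.ofMapLEIff
      (fun a => (⟨(a : P), Finset.mem_insert_of_mem a.2⟩ : ↥(insert p T)))
      (fun a b => Iff.rfl)
  have hint : ∀ (a₁ a₂ : ↥T) (b : ↥(insert p T)), φ a₁ ≤ b → b ≤ φ a₂ → ∃ a, φ a = b := by
    intro a₁ a₂ b h1 h2
    have hb : (b : P) ∈ insert p T := b.2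
    rcases Finset.mem_insert.1 hb with hbp | hbT
    · exfalso
      have hple : p ≤ (a₂ : P) := hbp ▸ h2
      have hpne : p ≠ (a₂ : P) := fun h => hp (h ▸ a₂.2)
      exact habove _ a₂.2 (lt_of_le_of_ne hple hpne)
    · exact ⟨⟨(b : P), hbT⟩, Subtype.ext rfl⟩
  -- transfer of Psi from T to S'
  have hφ : ∀ z : ↥T,
      PsiF (fun i : ↥T => (f (i : P))⁻¹) z
        = PsiF (fun i : ↥(insert p T) => (f (i : P))⁻¹) (φ z) := by
    intro z
    unfold PsiF
    refine Finset.sum_bij (fun w _ => φ w) ?_ ?_ ?_ ?_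
    · intro w hw
      rw [Finset.mem_filter] at hw ⊢
      exact ⟨Finset.mem_univ _, φ.monotone hw.2⟩
    · intro a _ b _ h
      exact φ.injective h
    · intro w hw
      rw [Finset.mem_filter] at hw
      have hw2 : (w : P) ≤ (z : P) := hw.2
      have hwT : (w : P) ∈ T := by
        rcases Finset.mem_insert.1 w.2 with hbp | hbT
        · exfalso
          have hple : p ≤ (z : P) := hbp ▸ hw2
          have hpne : p ≠ (z : P) := fun h => hp (h ▸ z.2)
          exact habove _ z.2 (lt_of_le_of_ne hple hpne)
        · exact hbT
      refine ⟨⟨(w : P), hwT⟩, ?_, Subtype.ext rfl⟩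
      rw [Finset.mem_filter]
      exact ⟨Finset.mem_univ _, hw2⟩
    · intro w hw
      refine congrArg₂ (fun u v : ℂ => u * v) rfl ?_
      refine Eq.trans (mu_irrel _ _ rfl _ _ _ _ _ _)
        (Eq.trans (mu_orderEmbedding φ hint w z).symm (mu_irrel _ _ rfl _ _ _ _ _ _))
  -- the value at p
  have heq : PsiF (fun i : ↥(insert p T) => (f (i : P))⁻¹) ⟨p, hpS⟩
      = ∑ z ∈ (insert p T).filter (fun z => z ≤ p), (1 / f z) * mobiusS (insert p T) z p := by
    unfold PsiF
    refine Finset.sum_bij (fun w _ => ((w : ↥(insert p T)) : P)) ?_ ?_ ?_ ?_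
    · intro w hw
      rw [Finset.mem_filter] at hw ⊢
      exact ⟨w.2, hw.2⟩
    · intro a _ b _ h
      exact Subtype.ext h
    · intro z hz
      rw [Finset.mem_filter] at hz
      refine ⟨⟨z, hz.1⟩, ?_, rfl⟩
      rw [Finset.mem_filter]
      exact ⟨Finset.mem_univ _, hz.2⟩
    · intro w hw
      rw [one_div]
      unfold mobiusS
      rw [dif_pos w.2, dif_pos hpS]
      refine congrArg₂ (fun u v : ℂ => u * v) rfl ?_
      rw [show (⟨((w : ↥(insert p T)) : P), w.2⟩ : ↥(insert p T)) = w from Subtype.ext rfl]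
      exact mu_irrel _ _ rfl _ _ _ _ _ _
  have hpsi_p : PsiF (fun i : ↥(insert p T) => (f (i : P))⁻¹) ⟨p, hpS⟩ ≠ 0 := by
    rw [heq]; exact hsum
  have hiffS := aux_join_iff_psi f hsemi hne
    (fun i : ↥(insert p T) => (i : P)) (fun i j => rfl)
  have hiffT := aux_join_iff_psi f hsemi hne (fun i : ↥T => (i : P)) (fun i j => rfl)
  refine Iff.trans (Iff.trans (isUnit_matrix_irrel _ _ _) hiffS)
    (Iff.trans ?_ (Iff.trans hiffT.symm (isUnit_matrix_irrel _ _ _)))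
  constructor
  · intro h z
    rw [hφ]
    exact h _
  · intro h x
    rcases Finset.mem_insert.1 x.2 with h1 | h1
    · have hx : x = ⟨p, hpS⟩ := Subtype.ext h1
      rw [hx]
      exact hpsi_p
    · have hx : x = φ ⟨(x : P), h1⟩ := Subtype.ext rfl
      rw [hx, ← hφ]
      exact h _
end

section
/- (Theorem 3.2) Let S = {x_1, ..., x_n} be a meet closed set of n distinct elements of P and let f be semimultiplicative with f(x) ≠ 0 for all x ∈ P. Then the join matrix [S]_f is invertible if and only if for every k = 1, ..., n one has Σ_{z ∈ S, z ≤ x_k} (1/f(z)) · μ_S(z, x_k) ≠ 0. -/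
open scoped Classical

open Matrix in
private lemma transpose_notation_test {R : Type*} [CommRing R] (M : Matrix (Fin 1) (Fin 1) R) :
    Mᵀ = M.transpose := rfl

private lemma mobius_inv {T : Type*} [PartialOrder T] [Fintype T]
    [LocallyFiniteOrder T] [DecidableEq T] (g : T → ℂ) (w : T) :
    ∑ t ∈ Finset.univ.filter (fun t => t ≤ w),
      ∑ s ∈ Finset.univ.filter (fun s => s ≤ t), g s * IncidenceAlgebra.mu ℂ s t = g w := by
  have hIcc : ∀ s w : T, Finset.Icc s w = Finset.univ.filter (fun t => s ≤ t ∧ t ≤ w) := by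
    intro s w; ext t; simp [Finset.mem_Icc]
  calc ∑ t ∈ Finset.univ.filter (fun t => t ≤ w),
        ∑ s ∈ Finset.univ.filter (fun s => s ≤ t), g s * IncidenceAlgebra.mu ℂ s t
      = ∑ t : T, ∑ s : T, if s ≤ t ∧ t ≤ w then g s * IncidenceAlgebra.mu ℂ s t else 0 := by
        rw [Finset.sum_filter]
        refine Finset.sum_congr rfl fun t _ => ?_
        rw [Finset.sum_filter]
        by_cases h : t ≤ w
        · simp [h]
        · simp [h]
    _ = ∑ s : T, ∑ t : T, if s ≤ t ∧ t ≤ w then g s * IncidenceAlgebra.mu ℂ s t else 0 :=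
        Finset.sum_comm
    _ = ∑ s : T, g s * ∑ t ∈ Finset.Icc s w, IncidenceAlgebra.mu ℂ s t := by
        refine Finset.sum_congr rfl fun s _ => ?_
        rw [hIcc, Finset.mul_sum, Finset.sum_filter]
    _ = ∑ s : T, g s * if s = w then 1 else 0 := by
        refine Finset.sum_congr rfl fun s _ => ?_
        rw [IncidenceAlgebra.sum_Icc_mu_right]
    _ = g w := by simp

open Matrix in
/-- Theorem 3.2: Let `S = {x_1, …, x_n}` be a meet closed set of `n` distinct
elements of a lattice `P` with finite principal order ideals, indexed so that `x_i < x_j → i < j`,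
and let `f` be semimultiplicative with nonzero values. Then the join matrix `[S]_f` is invertible
iff for every `k` one has `Σ_{z ∈ S, z ≤ x_k} (1/f(z)) · μ_S(z, x_k) ≠ 0`. -/
theorem joinMatrix_isUnit_iff_sums_ne_zero
    {P : Type*} [Lattice P] (hfin : ∀ q : P, {y : P | y ≤ q}.Finite)
    (f : P → ℂ) (hsemi : ∀ a b : P, f a * f b = f (a ⊓ b) * f (a ⊔ b))
    (hne : ∀ a : P, f a ≠ 0)
    {n : ℕ} (x : Fin n → P) (hinj : Function.Injective x)
    (hidx : ∀ i j : Fin n, x i < x j → i < j)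
    (hmeet : ∀ i j : Fin n, ∃ k : Fin n, x k = x i ⊓ x j) :
    IsUnit (Matrix.of fun i j : Fin n => f (x i ⊔ x j)) ↔
      ∀ k : Fin n,
        ∑ i ∈ Finset.univ.filter (fun i : Fin n => x i ≤ x k),
          (1 / f (x i)) * mobiusS (Finset.image x Finset.univ) (x i) (x k) ≠ 0 := by
  classical
  set S : Finset P := Finset.image x Finset.univ with hS
  have hxS : ∀ i, x i ∈ S := fun i => Finset.mem_image_of_mem x (Finset.mem_univ i)
  letI : LocallyFiniteOrder ↥S := Fintype.toLocallyFiniteOrder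
  set e : Fin n → ↥S := fun i => ⟨x i, hxS i⟩ with he
  have he_inj : Function.Injective e := fun i j h => hinj (congrArg Subtype.val h)
  have he_surj : Function.Surjective e := by
    rintro ⟨z, hz⟩
    obtain ⟨i, _, rfl⟩ := Finset.mem_image.1 hz
    exact ⟨i, rfl⟩
  set ψ : Fin n → ℂ := fun k =>
    ∑ i ∈ Finset.univ.filter (fun i : Fin n => x i ≤ x k),
      (1 / f (x i)) * mobiusS S (x i) (x k) with hψdef
  set Ψ : ↥S → ℂ := fun t =>
    ∑ s ∈ Finset.univ.filter (fun s : ↥S => s ≤ t),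
      (1 / f (s : P)) * IncidenceAlgebra.mu ℂ s t with hΨdef
  have hmob : ∀ i k : Fin n, mobiusS S (x i) (x k) = IncidenceAlgebra.mu ℂ (e i) (e k) := by
    intro i k
    simp only [mobiusS, dif_pos (hxS i), dif_pos (hxS k)]
    rfl
  have hψΨ : ∀ k, ψ k = Ψ (e k) := by
    intro k
    rw [hψdef, hΨdef]
    refine Finset.sum_bij (fun i _ => e i) ?_ ?_ ?_ ?_
    · intro i hi
      exact Finset.mem_filter.2 ⟨Finset.mem_univ _, (Finset.mem_filter.1 hi).2⟩
    · intro i _ j _ h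
      exact he_inj h
    · intro s hs
      obtain ⟨i, rfl⟩ := he_surj s
      exact ⟨i, Finset.mem_filter.2 ⟨Finset.mem_univ i, (Finset.mem_filter.1 hs).2⟩, rfl⟩
    · intro i _
      rw [hmob]
  have key : ∀ m : Fin n,
      ∑ k ∈ Finset.univ.filter (fun k : Fin n => x k ≤ x m), ψ k = 1 / f (x m) := by
    intro m
    have hstep : ∑ k ∈ Finset.univ.filter (fun k : Fin n => x k ≤ x m), ψ k
        = ∑ t ∈ Finset.univ.filter (fun t : ↥S => t ≤ e m), Ψ t := by
      refine Finset.sum_bij (fun i _ => e i) ?_ ?_ ?_ ?_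
      · intro i hi
        exact Finset.mem_filter.2 ⟨Finset.mem_univ _, (Finset.mem_filter.1 hi).2⟩
      · intro i _ j _ h
        exact he_inj h
      · intro s hs
        obtain ⟨i, rfl⟩ := he_surj s
        exact ⟨i, Finset.mem_filter.2 ⟨Finset.mem_univ i, (Finset.mem_filter.1 hs).2⟩, rfl⟩
      · intro i _
        exact hψΨ i
    rw [hstep, hΨdef]
    exact mobius_inv (fun s : ↥S => 1 / f (s : P)) (e m)
  -- matrices
  set D : Matrix (Fin n) (Fin n) ℂ := Matrix.diagonal (fun i => f (x i)) with hD
  set E : Matrix (Fin n) (Fin n) ℂ :=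
    Matrix.of (fun i k : Fin n => if x k ≤ x i then (1 : ℂ) else 0) with hE
  have hmid : ∀ i j : Fin n, (E * Matrix.diagonal ψ * Eᵀ) i j = 1 / f (x i ⊓ x j) := by
    intro i j
    obtain ⟨m, hm⟩ := hmeet i j
    have h1 : (E * Matrix.diagonal ψ * Eᵀ) i j
        = ∑ k, (if x k ≤ x i then (1 : ℂ) else 0) * ψ k * (if x k ≤ x j then (1 : ℂ) else 0) := by
      rw [Matrix.mul_apply]
      refine Finset.sum_congr rfl fun k _ => ?_
      rw [Matrix.mul_diagonal, Matrix.transpose_apply]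
      rfl
    rw [h1, ← hm]
    have h2 : ∀ k : Fin n,
        (if x k ≤ x i then (1 : ℂ) else 0) * ψ k * (if x k ≤ x j then (1 : ℂ) else 0)
          = if x k ≤ x m then ψ k else 0 := by
      intro k
      have hiff : x k ≤ x m ↔ x k ≤ x i ∧ x k ≤ x j := by rw [hm]; exact le_inf_iff
      by_cases hc1 : x k ≤ x i <;> by_cases hc2 : x k ≤ x j <;>
        simp [hc1, hc2, hiff]
    rw [Finset.sum_congr rfl fun k _ => h2 k, ← Finset.sum_filter]
    exact key m
  have hA : (Matrix.of fun i j : Fin n => f (x i ⊔ x j))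
      = D * (E * Matrix.diagonal ψ * Eᵀ) * D := by
    ext i j
    rw [Matrix.mul_apply]
    have h3 : ∀ k, (D * (E * Matrix.diagonal ψ * Eᵀ)) i k * D k j
        = if k = j then f (x i) * ((E * Matrix.diagonal ψ * Eᵀ) i k * f (x k)) else 0 := by
      intro k
      rw [hD, Matrix.diagonal_mul]
      by_cases h : k = j
      · subst h
        rw [Matrix.diagonal_apply_eq, if_pos rfl]
        ring
      · rw [Matrix.diagonal_apply_ne _ h, if_neg h, mul_zero]
    rw [Finset.sum_congr rfl fun k _ => h3 k, Finset.sum_ite_eq' Finset.univ j]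
    simp only [Finset.mem_univ, if_true]
    rw [hmid i j]
    have h0 := hne (x i ⊓ x j)
    have hs := hsemi (x i) (x j)
    show f (x i ⊔ x j) = f (x i) * (1 / f (x i ⊓ x j) * f (x j))
    field_simp
    linear_combination -hs
  rw [hA]
  have hdetE : E.det = 1 := by
    have htri : E.BlockTriangular OrderDual.toDual := by
      intro i k h
      have hik : (i : Fin n) < k := h
      show (if x k ≤ x i then (1 : ℂ) else 0) = 0
      rw [if_neg]
      intro hle
      rcases eq_or_lt_of_le hle with heq | hlt
      · exact absurd (hinj heq) (ne_of_gt hik)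
      · exact absurd (hidx _ _ hlt) (not_lt_of_gt hik)
    rw [Matrix.det_of_lowerTriangular E htri]
    have hdiag : ∀ i : Fin n, E i i = 1 := fun i => if_pos le_rfl
    simp [hdiag]
  rw [Matrix.isUnit_iff_isUnit_det]
  simp only [Matrix.det_mul, Matrix.det_transpose, hdetE, hD, Matrix.det_diagonal]
  rw [isUnit_iff_ne_zero]
  simp only [one_mul, mul_one]
  have hDne : (∏ i, f (x i)) ≠ 0 := Finset.prod_ne_zero_iff.2 fun i _ => hne (x i)
  constructor
  · intro h k hk
    apply h
    have hz : ψ k = 0 := hk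
    simp [Finset.prod_eq_zero (Finset.mem_univ k) hz]
  · intro h
    have hprod : (∏ i, ψ i) ≠ 0 := Finset.prod_ne_zero_iff.2 fun i _ => h i
    exact mul_ne_zero (mul_ne_zero hDne hprod) hDne
end

section
/- (Theorem 3.3, chain case) Let S = {x_1, ..., x_n} be a chain x_1 < x_2 < ... < x_n in P and let f be semimultiplicative with f(x) ≠ 0 for all x ∈ P. Then the join matrix [S]_f is invertible if and only if f(x_k) ≠ f(x_{k-1}) for all k = 2, 3, ..., n. -/
open Matrix in
/-- Theorem 3.3, chain case: If `S = {x_1, …, x_n}` is a chain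
`x_1 < x_2 < ⋯ < x_n` in a lattice `P` with finite principal order ideals and `f` is
semimultiplicative with nonzero values, then the join matrix `[S]_f` is invertible iff
`f(x_k) ≠ f(x_{k-1})` for all `k = 2, …, n`. -/
theorem joinMatrix_chain_isUnit_iff
    {P : Type*} [Lattice P] (hfin : ∀ q : P, {y : P | y ≤ q}.Finite)
    (f : P → ℂ) (hsemi : ∀ a b : P, f a * f b = f (a ⊓ b) * f (a ⊔ b))
    (hne : ∀ a : P, f a ≠ 0)
    {n : ℕ} (x : Fin n → P) (hchain : StrictMono x) :
    IsUnit (Matrix.of fun i j : Fin n => f (x i ⊔ x j)) ↔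
      ∀ i : ℕ, ∀ h : i + 1 < n,
        f (x ⟨i + 1, h⟩) ≠ f (x ⟨i, Nat.lt_of_succ_lt h⟩) := by
  classical
  -- `g` extends `fun i => f (x i)` by zero
  set g : ℕ → ℂ := fun k => if h : k < n then f (x ⟨k, h⟩) else 0 with hg
  set d : Fin n → ℂ := fun k => g k - g (k + 1) with hd
  -- telescoping: for m : Fin n, a m = ∑_{k ≥ m} d k
  have key : ∀ m : Fin n, (∑ k : Fin n, if m ≤ k then d k else 0) = f (x m) := by
    intro m
    have h1 : (∑ k : Fin n, if m ≤ k then d k else 0)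
        = ∑ k ∈ Finset.range n, if (m : ℕ) ≤ k then g k - g (k + 1) else 0 := by
      rw [← Fin.sum_univ_eq_sum_range
        (fun k => if (m : ℕ) ≤ k then g k - g (k + 1) else 0) n]
      refine Finset.sum_congr rfl fun k _ => ?_
      exact if_congr Fin.le_def rfl rfl
    rw [h1]
    have h2 : (Finset.range n).filter (fun k => (m : ℕ) ≤ k) = Finset.Ico (m : ℕ) n := by
      ext k; simp [Finset.mem_Ico, And.comm]
    rw [← Finset.sum_filter, h2, Finset.sum_Ico_eq_sum_range]
    simp only [Nat.add_assoc]
    rw [Finset.sum_range_sub' (fun i => g ((m : ℕ) + i))]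
    have hmn : (m : ℕ) + (n - (m : ℕ)) = n := Nat.add_sub_cancel' m.2.le
    rw [Nat.add_zero, hmn]
    simp [hg, m.2]
  -- the triangular matrix
  set L : Matrix (Fin n) (Fin n) ℂ := Matrix.of fun k i => if i ≤ k then (1 : ℂ) else 0 with hL
  have hfact : (Matrix.of fun i j : Fin n => f (x i ⊔ x j))
      = Lᵀ * Matrix.diagonal d * L := by
    ext i j
    have hsup : x i ⊔ x j = x (i ⊔ j) := (hchain.monotone.map_sup i j).symm
    rw [Matrix.mul_assoc, Matrix.mul_apply]
    simp only [Matrix.of_apply, Matrix.transpose_apply, Matrix.diagonal_mul, hL,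
      Matrix.of_apply]
    rw [hsup, ← key (i ⊔ j)]
    apply Finset.sum_congr rfl
    intro k _
    by_cases hik : i ≤ k <;> by_cases hjk : j ≤ k <;>
      simp [hik, hjk, sup_le_iff, mul_comm]
  have hLtri : L.BlockTriangular OrderDual.toDual := by
    intro i j hij
    simp only [OrderDual.toDual_lt_toDual] at hij
    simp [hL, not_le.mpr hij]
  have hdetL : L.det = 1 := by
    rw [Matrix.det_of_lowerTriangular L hLtri]
    simp [hL]
  have hdet : (Matrix.of fun i j : Fin n => f (x i ⊔ x j)).det = ∏ k : Fin n, d k := by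
    rw [hfact, Matrix.det_mul, Matrix.det_mul, Matrix.det_transpose, hdetL,
      Matrix.det_diagonal]
    ring
  rw [Matrix.isUnit_iff_isUnit_det, hdet, isUnit_iff_ne_zero, Finset.prod_ne_zero_iff]
  constructor
  · intro H i hi hcontra
    have := H ⟨i, Nat.lt_of_succ_lt hi⟩ (Finset.mem_univ _)
    apply this
    simp only [hd, hg]
    rw [dif_pos (Nat.lt_of_succ_lt hi), dif_pos hi, hcontra, sub_self]
  · intro H k _
    simp only [hd, hg]
    by_cases hk : (k : ℕ) + 1 < n
    · rw [dif_pos k.2, dif_pos hk]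
      have := H k hk
      intro hcontra
      exact this (by rw [sub_eq_zero] at hcontra; exact hcontra.symm)
    · rw [dif_pos k.2, dif_neg hk, sub_zero]
      exact hne _
end

section
/- (Theorem 3.3, x_1-set case) Let S = {x_1, ..., x_n} be a set of n distinct elements of P such that x_i ∧ x_j = x_1 for all i ≠ j, and let f be semimultiplicative with f(x) ≠ 0 for all x ∈ P. Then the join matrix [S]_f is invertible if and only if f(x_k) ≠ f(x_1) for all k = 2, 3, ..., n. -/
/-- Theorem 3.3, `x₁`-set case: If `S = {x_1, …, x_n}` is a set of `n` distinct
elements of a lattice `P` with finite principal order ideals such that `x_i ⊓ x_j = x_1` for all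
`i ≠ j`, and `f` is semimultiplicative with nonzero values, then the join matrix `[S]_f` is
invertible iff `f(x_k) ≠ f(x_1)` for all `k = 2, …, n`. -/
theorem joinMatrix_x1set_isUnit_iff
    {P : Type*} [Lattice P] (hfin : ∀ q : P, {y : P | y ≤ q}.Finite)
    (f : P → ℂ) (hsemi : ∀ a b : P, f a * f b = f (a ⊓ b) * f (a ⊔ b))
    (hne : ∀ a : P, f a ≠ 0)
    {n : ℕ} (hn : 0 < n) (x : Fin n → P) (hinj : Function.Injective x)
    (hx1 : ∀ i j : Fin n, i ≠ j → x i ⊓ x j = x ⟨0, hn⟩) :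
    IsUnit (Matrix.of fun i j : Fin n => f (x i ⊔ x j)) ↔
      ∀ k : Fin n, k ≠ ⟨0, hn⟩ → f (x k) ≠ f (x ⟨0, hn⟩) := by
  set x0 : Fin n := ⟨0, hn⟩ with hx0def
  set c : ℂ := f (x x0) with hcdef
  have hc : c ≠ 0 := hne _
  have hle : ∀ i : Fin n, x x0 ≤ x i := by
    intro i
    by_cases h : i = x0
    · simp [h]
    · exact inf_eq_right.mp (hx1 i x0 h)
  have hjoin : ∀ i j : Fin n, i ≠ j → f (x i ⊔ x j) = f (x i) * f (x j) / c := by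
    intro i j hij
    have := hsemi (x i) (x j)
    rw [hx1 i j hij, ← hcdef] at this
    field_simp
    linear_combination -this
  -- define the triangular factors
  set U : Matrix (Fin n) (Fin n) ℂ :=
    Matrix.of (fun i j : Fin n =>
      if i = x0 then f (x j) else if i = j then f (x i) - f (x i) ^ 2 / c else 0) with hUdef
  set N : Matrix (Fin n) (Fin n) ℂ :=
    Matrix.of (fun i k : Fin n =>
      if k = x0 ∧ i ≠ x0 then f (x i) / c else 0) with hNdef
  have hfac : (Matrix.of fun i j : Fin n => f (x i ⊔ x j)) = (1 + N) * U := by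
    ext i j
    have hNU : (N * U) i j = N i x0 * U x0 j := by
      rw [Matrix.mul_apply]
      refine Finset.sum_eq_single x0 (fun k _ hk => ?_) (by simp)
      simp [hNdef, hk]
    rw [Matrix.add_mul, Matrix.one_mul, Matrix.add_apply, hNU]
    by_cases hi : i = x0
    · subst hi
      simp only [hNdef, hUdef, Matrix.of_apply, if_pos rfl]
      simp [sup_eq_right.mpr (hle j)]
    · by_cases hij : i = j
      · subst hij
        simp only [hNdef, hUdef, Matrix.of_apply, if_pos rfl, hi, if_neg hi,
          and_true, if_true, Ne, not_false_iff, if_pos rfl]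
        rw [sup_idem]
        simp only [↓reduceIte]
        field_simp
        ring
      · simp only [hNdef, hUdef, Matrix.of_apply, if_neg hi, hi, if_neg hij,
          and_true, if_pos rfl, Ne, not_false_iff, if_true]
        rw [hjoin i j hij]
        simp
        ring
  have hdetL : (1 + N : Matrix (Fin n) (Fin n) ℂ).det = 1 := by
    have htri : (1 + N : Matrix (Fin n) (Fin n) ℂ).BlockTriangular OrderDual.toDual := by
      intro i j hij
      have hij' : (i : Fin n) < j := hij
      have hj0 : j ≠ x0 := by
        intro h
        rw [h] at hij'
        exact absurd hij' (by simp [hx0def, Fin.le_def, Fin.lt_def])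
      simp [Matrix.add_apply, Matrix.one_apply, hNdef, hij'.ne, hj0]
    rw [Matrix.det_of_lowerTriangular _ htri]
    have : ∀ i : Fin n, (1 + N) i i = 1 := by
      intro i
      simp [Matrix.add_apply, Matrix.one_apply, hNdef]
    simp [this]
  have hdetU : U.det = ∏ i : Fin n, U i i := by
    apply Matrix.det_of_upperTriangular
    intro i j hij
    have hij' : (j : Fin n) < i := hij
    have hi0 : i ≠ x0 := by
      intro h
      rw [h] at hij'
      exact absurd hij' (by simp [hx0def, Fin.le_def, Fin.lt_def])
    simp [hUdef, hi0, hij'.ne']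
  have hdet : (Matrix.of fun i j : Fin n => f (x i ⊔ x j)).det = ∏ i : Fin n, U i i := by
    rw [hfac, Matrix.det_mul, hdetL, one_mul, hdetU]
  rw [Matrix.isUnit_iff_isUnit_det, hdet, isUnit_iff_ne_zero, Finset.prod_ne_zero_iff]
  constructor
  · intro h k hk hfk
    have := h k (Finset.mem_univ k)
    simp only [hUdef, Matrix.of_apply, if_neg hk, if_pos rfl, if_true, eq_self_iff_true] at this
    apply this
    rw [hfk]
    field_simp
    ring
  · intro h i _
    by_cases hi : i = x0
    · simpa [hUdef, hi] using hc
    · simp only [hUdef, Matrix.of_apply, if_neg hi, if_pos rfl]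
      intro hzero
      apply h i hi
      have hfi := hne (x i)
      have h2 : f (x i) * f (x i) = f (x i) * c := by
        simp only [↓reduceIte] at hzero
        field_simp at hzero
        linear_combination -hzero
      exact mul_left_cancel₀ hfi h2
end

section
/- (Corollary 3.1, chain case) Let x_1, x_2, ..., x_n be distinct positive integers forming a divisor chain, i.e., x_1 | x_2 | ... | x_n. Then the LCM matrix [S] on S = {x_1, ..., x_n} is invertible. -/
/-- The determinant of the "max matrix" of a strictly increasing positive sequence
is nonzero. -/
lemma maxMatrix_det_ne_zero : ∀ (n : ℕ) (y : Fin n → ℚ),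
    (∀ i j : Fin n, i < j → y i < y j) → (∀ i, 0 < y i) →
    (Matrix.of fun i j : Fin n => y (max i j)).det ≠ 0 := by
  intro n
  induction n with
  | zero =>
    intro y _ _
    simp [Matrix.det_fin_zero]
  | succ m ih =>
    cases m with
    | zero =>
      intro y _ hpos
      have : (Matrix.of fun i j : Fin 1 => y (max i j)).det = y 0 := by
        rw [Matrix.det_fin_one]; simp
      rw [this]
      exact (hpos 0).ne'
    | succ k =>
      intro y hmono hpos
      set A : Matrix (Fin (k + 2)) (Fin (k + 2)) ℚ :=
        Matrix.of fun i j : Fin (k + 2) => y (max i j) with hA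
      set B : Matrix (Fin (k + 2)) (Fin (k + 2)) ℚ :=
        A.updateRow 0 (A 0 + (-1 : ℚ) • A 1) with hB
      have hdet : B.det = A.det :=
        Matrix.det_updateRow_add_smul_self A (Fin.zero_ne_one) (-1)
      have hB00 : B 0 0 = y 0 - y 1 := by
        simp [hB, hA, Matrix.updateRow_self, max_eq_right (Fin.zero_le (1 : Fin (k + 2)))]
        ring
      have hB0j : ∀ j : Fin (k + 2), j ≠ 0 → B 0 j = 0 := by
        intro j hj
        have h1j : (1 : Fin (k + 2)) ≤ j := by
          have hv : (j : ℕ) ≠ 0 := fun h => hj (Fin.ext (by simp [h]))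
          rw [Fin.le_def, Fin.val_one]
          omega
        simp [hB, hA, Matrix.updateRow_self, max_eq_right (Fin.zero_le j),
          max_eq_right h1j]
      have hsub : B.submatrix Fin.succ Fin.succ =
          Matrix.of fun i j : Fin (k + 1) => (y ∘ Fin.succ) (max i j) := by
        ext i j
        have : A (Fin.succ i) (Fin.succ j) = y (max (Fin.succ i) (Fin.succ j)) := rfl
        simp only [Matrix.submatrix_apply, hB, Matrix.updateRow_ne (Fin.succ_ne_zero i), this]
        congr 1
        exact (Fin.strictMono_succ.monotone.map_max).symm
      have hdetB : B.det = B 0 0 * (B.submatrix Fin.succ Fin.succ).det := by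
        rw [Matrix.det_succ_row_zero]
        rw [Finset.sum_eq_single (0 : Fin (k + 2))]
        · simp [Fin.succAbove_zero]
        · intro j _ hj
          rw [hB0j j hj]; ring
        · intro h; exact absurd (Finset.mem_univ _) h
      have hIH : (B.submatrix Fin.succ Fin.succ).det ≠ 0 := by
        rw [hsub]
        exact ih (y ∘ Fin.succ)
          (fun i j hij => hmono _ _ (Fin.succ_lt_succ_iff.mpr hij))
          (fun i => hpos _)
      have h01 : y 0 < y 1 := hmono 0 1 (by simp [Fin.lt_iff_val_lt_val])
      rw [← hdet, hdetB, hB00]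
      exact mul_ne_zero (sub_ne_zero.mpr h01.ne) hIH

/-- Corollary 3.1, chain case: If `x_1, …, x_n` are distinct positive integers
forming a divisor chain `x_1 ∣ x_2 ∣ ⋯ ∣ x_n`, then the LCM matrix `[S]` is invertible. -/
theorem lcmMatrix_divisorChain_isUnit
    {n : ℕ} (x : Fin n → ℕ) (hinj : Function.Injective x)
    (hpos : ∀ i, 0 < x i) (hchain : ∀ i j : Fin n, i ≤ j → x i ∣ x j) :
    IsUnit (Matrix.of fun i j : Fin n => (Nat.lcm (x i) (x j) : ℚ)) := by
  have hmono : ∀ i j : Fin n, i < j → x i < x j := by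
    intro i j hij
    exact lt_of_le_of_ne (Nat.le_of_dvd (hpos j) (hchain i j hij.le))
      (fun h => (hij.ne (hinj h)).elim)
  have heq : (Matrix.of fun i j : Fin n => (Nat.lcm (x i) (x j) : ℚ)) =
      Matrix.of fun i j : Fin n => ((x (max i j) : ℚ)) := by
    ext i j
    simp only [Matrix.of_apply]
    rcases le_total i j with h | h
    · rw [Nat.dvd_antisymm (Nat.lcm_dvd (hchain i j h) dvd_rfl) (Nat.dvd_lcm_right _ _),
        max_eq_right h]
    · rw [Nat.dvd_antisymm (Nat.lcm_dvd dvd_rfl (hchain j i h)) (Nat.dvd_lcm_left _ _),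
        max_eq_left h]
  rw [heq, Matrix.isUnit_iff_isUnit_det, isUnit_iff_ne_zero]
  exact maxMatrix_det_ne_zero n (fun i => (x i : ℚ))
    (fun i j hij => Nat.cast_lt.mpr (hmono i j hij))
    (fun i => Nat.cast_pos.mpr (hpos i))
end

section
/- (Corollary 3.1, x_1-set case) Let S = {x_1, ..., x_n} be a set of distinct positive integers such that gcd(x_i, x_j) = x_1 for all i ≠ j. Then the LCM matrix [S] is invertible. -/
/-- Corollary 3.1, `x₁`-set case: If `S = {x_1, …, x_n}` is a set of distinct
positive integers with `gcd(x_i, x_j) = x_1` for all `i ≠ j`, then the LCM matrix `[S]` is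
invertible. -/
theorem lcmMatrix_x1set_isUnit
    {n : ℕ} (hn : 0 < n) (x : Fin n → ℕ) (hinj : Function.Injective x)
    (hpos : ∀ i, 0 < x i)
    (hgcd : ∀ i j : Fin n, i ≠ j → Nat.gcd (x i) (x j) = x ⟨0, hn⟩) :
    IsUnit (Matrix.of fun i j : Fin n => (Nat.lcm (x i) (x j) : ℚ)) := by
  set z : Fin n := ⟨0, hn⟩ with hz
  set a : ℕ := x z with ha
  have ha0 : (a : ℚ) ≠ 0 := by exact_mod_cast (hpos z).ne'
  have hxQ : ∀ i, (x i : ℚ) ≠ 0 := fun i => by exact_mod_cast (hpos i).ne'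
  have hdvd : ∀ j, a ∣ x j := by
    intro j
    by_cases hj : j = z
    · subst hj; rfl
    · rw [← hgcd z j (fun h => hj h.symm)]; exact Nat.gcd_dvd_right _ _
  set M : Matrix (Fin n) (Fin n) ℚ :=
    Matrix.of fun i j : Fin n => (Nat.lcm (x i) (x j) : ℚ) with hM
  -- values of M
  have hMdiag : ∀ i, M i i = (x i : ℚ) := by
    intro i; simp [hM, Nat.lcm_self]
  have hMz : ∀ j, M z j = (x j : ℚ) := by
    intro j; simp [hM, ha, Nat.lcm, Nat.gcd_eq_left (hdvd j),
      Nat.mul_div_cancel_left _ (hpos z)]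
    have hg : (x z).gcd (x j) = x z := Nat.gcd_eq_left (hdvd j)
    rw [hg]; exact mul_div_cancel_left₀ _ (hxQ z)
  have hMoff : ∀ i j, i ≠ j → M i j = (x i : ℚ) * (x j : ℚ) / a := by
    intro i j hij
    have h1 : Nat.gcd (x i) (x j) * Nat.lcm (x i) (x j) = x i * x j :=
      Nat.gcd_mul_lcm _ _
    rw [hgcd i j hij] at h1
    have : (a : ℚ) * (Nat.lcm (x i) (x j) : ℚ) = (x i : ℚ) * (x j : ℚ) := by
      exact_mod_cast h1
    simp only [hM, Matrix.of_apply]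
    field_simp
    linarith [this]
  set L : Matrix (Fin n) (Fin n) ℚ :=
    Matrix.of fun i j : Fin n =>
      if j = i then 1 else if j = z ∧ i ≠ z then -(x i : ℚ) / a else 0 with hL
  have hLtri : L.BlockTriangular OrderDual.toDual := by
    intro i j hij
    have hij' : i < j := hij
    have h1 : j ≠ i := hij'.ne'
    have h2 : ¬(j = z ∧ i ≠ z) := by
      rintro ⟨rfl, -⟩
      rw [hz, Fin.lt_def] at hij'
      exact Nat.not_lt_zero _ hij'
    simp [hL, h1, h2]
  have hLdet : L.det = 1 := by
    rw [Matrix.det_of_lowerTriangular L hLtri]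
    simp [hL]
  have hmul : ∀ i j, (L * M) i j =
      (if i = z then M z j else M i j - (x i : ℚ) / a * M z j) := by
    intro i j
    rw [Matrix.mul_apply]
    by_cases hi : i = z
    · subst hi
      rw [Finset.sum_eq_single z]
      · simp [hL]
      · intro k _ hk; simp [hL, hk, Matrix.of_apply]
      · simp
    · rw [show (Finset.univ : Finset (Fin n)) = insert z (Finset.univ.erase z) by
          simp [Finset.insert_erase]]
      rw [Finset.sum_insert (Finset.notMem_erase _ _)]
      rw [Finset.sum_eq_single_of_mem i (Finset.mem_erase.mpr ⟨hi, Finset.mem_univ i⟩)]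
      · have hiz : ¬ z = i := fun h => hi h.symm
        rw [if_neg hi]
        have h1 : L i z = -(x i : ℚ)/a := by simp [hL, hiz, hi]
        have h2 : L i i = 1 := by simp [hL]
        rw [h1, h2]
        ring
      · intro k hk hki
        have hkz : k ≠ z := (Finset.mem_erase.mp hk).1
        simp [hL, hki, hkz]
  have hNtri : (L * M).BlockTriangular id := by
    intro i j hij
    have hij' : (j : Fin n) < i := hij
    have hi : i ≠ z := by
      rintro rfl
      rw [hz, Fin.lt_def] at hij'
      exact Nat.not_lt_zero _ hij'
    have hijne : i ≠ j := hij'.ne'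
    rw [hmul, if_neg hi, hMoff i j hijne, hMz]
    ring_nf
  have hNdet : (L * M).det ≠ 0 := by
    rw [Matrix.det_of_upperTriangular hNtri]
    apply Finset.prod_ne_zero_iff.mpr
    intro i _
    by_cases hi : i = z
    · subst hi; rw [hmul, if_pos rfl, hMz]; exact hxQ z
    · rw [hmul, if_neg hi, hMdiag, hMz]
      have key : (x i : ℚ) - (x i : ℚ)/a * (x i : ℚ) = (x i : ℚ) * ((a : ℚ) - x i) / a := by
        field_simp
      rw [key]
      intro h
      have h2 := (mul_eq_zero.mp ((div_eq_zero_iff.mp h).resolve_right ha0)).resolve_left (hxQ i)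
      have h3 : (x i : ℚ) = (a : ℚ) := by linarith
      have h4 : x i = x z := by exact_mod_cast h3
      exact hi (hinj h4)
  have hMdet : M.det ≠ 0 := by
    intro h
    apply hNdet
    rw [Matrix.det_mul, hLdet, h, one_mul]
  exact (Matrix.isUnit_iff_isUnit_det M).mpr (isUnit_iff_ne_zero.mpr hMdet)
end

section
/- (Theorem 3.4) Let n ≥ 3, let S = {x_1, ..., x_n} be a set of n distinct elements of P such that x_i ∧ x_j = x_1 for all distinct i, j ≤ n−1 and x_1 ∨ x_2 ∨ ... ∨ x_{n−1} ≤ x_n, and let f be semimultiplicative with f(x) ≠ 0 for all x ∈ P. Then the join matrix [S]_f is invertible if and only if f(x_k) ≠ f(x_1) for all k = 2, 3, ..., n−1 and 1/f(x_n) ≠ (Σ_{k=2}^{n−1} 1/f(x_k)) − (n−3)/f(x_1). -/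
private theorem aux_joinMatrix {n : ℕ} (hn : 3 ≤ n) (i0 iN : Fin n)
    (h0 : (i0 : ℕ) = 0) (hNv : (iN : ℕ) = n - 1)
    (a : Fin n → ℂ) (M : Matrix (Fin n) (Fin n) ℂ)
    (hane : ∀ i, a i ≠ 0)
    (hdiag : ∀ i, M i i = a i)
    (hcolN : ∀ i, M i iN = a iN)
    (hrowN : ∀ j, M iN j = a iN)
    (hoff : ∀ i j : Fin n, i ≠ j → (i : ℕ) < n - 1 → (j : ℕ) < n - 1 →
      a i0 * M i j = a i * a j) :
    IsUnit M ↔ ((∀ k : Fin n, 0 < (k : ℕ) → (k : ℕ) < n - 1 → a k ≠ a i0) ∧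
      1 / a iN ≠
        (∑ k ∈ Finset.univ.filter (fun k : Fin n => 0 < (k : ℕ) ∧ (k : ℕ) < n - 1),
          1 / a k) - ((n : ℂ) - 3) / a i0) := by
  classical
  set F : Finset (Fin n) := Finset.univ.filter (fun j : Fin n => (j : ℕ) < n - 1) with hF
  have hFmem : ∀ j : Fin n, j ∈ F ↔ (j : ℕ) < n - 1 := by
    intro j; simp [hF]
  have hvalN : ∀ j : Fin n, j ≠ iN → (j : ℕ) < n - 1 := by
    intro j hj
    have h1 := j.isLt
    have h2 : (j : ℕ) ≠ n - 1 := fun hc => hj (Fin.ext (by rw [hNv]; exact hc))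
    omega
  have huniv : Finset.univ.erase iN = F := by
    ext j
    have hj := j.isLt
    simp only [Finset.mem_erase, Finset.mem_univ, and_true, hF, Finset.mem_filter, true_and,
      Ne, Fin.ext_iff, hNv]
    omega
  have hi0F : i0 ∈ F := by rw [hFmem, h0]; omega
  have hcardF : F.card = n - 1 := by
    rw [← huniv, Finset.card_erase_of_mem (Finset.mem_univ iN), Finset.card_univ,
      Fintype.card_fin]
  have hsplit : ∀ g : Fin n → ℂ, ∑ j, g j = (∑ j ∈ F, g j) + g iN := by
    intro g
    rw [← Finset.sum_erase_add Finset.univ g (Finset.mem_univ iN), huniv]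
  have hFerase : Finset.univ.filter (fun k : Fin n => 0 < (k : ℕ) ∧ (k : ℕ) < n - 1)
      = F.erase i0 := by
    ext j
    simp only [Finset.mem_filter, Finset.mem_univ, true_and, Finset.mem_erase, hF,
      Ne, Fin.ext_iff, h0]
    omega
  have hc2 : ((F.erase i0).card : ℂ) = (n : ℂ) - 2 := by
    rw [Finset.card_erase_of_mem hi0F, hcardF,
      (by omega : n - 1 - 1 = n - 2), Nat.cast_sub (by omega)]
    norm_num
  -- key row identity for rows i with i < n-1
  have keyrow : ∀ (v : Fin n → ℂ), ∀ i ∈ F,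
      a i0 * M.mulVec v i =
        a i * (∑ j ∈ F, a j * v j) + (a i0 - a i) * a i * v i + a i0 * (a iN * v iN) := by
    intro v i hiF
    have hi' : (i : ℕ) < n - 1 := (hFmem i).1 hiF
    have hmv : M.mulVec v i = (∑ j ∈ F, M i j * v j) + M i iN * v iN := by
      rw [Matrix.mulVec, dotProduct]
      exact hsplit _
    rw [hmv, hcolN, mul_add]
    congr 1
    rw [Finset.mul_sum]
    have hterm : ∀ j ∈ F, a i0 * (M i j * v j)
        = a i * (a j * v j) + (if j = i then (a i0 - a i) * a i * v i else 0) := by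
      intro j hj
      by_cases hji : j = i
      · subst hji
        rw [if_pos rfl, hdiag]
        ring
      · rw [if_neg hji, add_zero, ← mul_assoc, ← mul_assoc,
          hoff i j (fun h => hji h.symm) hi' ((hFmem j).1 hj)]
    rw [Finset.sum_congr rfl hterm, Finset.sum_add_distrib, Finset.sum_ite_eq' F i,
      if_pos hiF, ← Finset.mul_sum]
  have rowN : ∀ v : Fin n → ℂ, M.mulVec v iN = a iN * ∑ j, v j := by
    intro v
    rw [Matrix.mulVec, dotProduct, Finset.mul_sum]
    exact Finset.sum_congr rfl fun j _ => by rw [hrowN]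
  -- main equivalence via kernel
  have hmain : (∃ v, v ≠ 0 ∧ M.mulVec v = 0) ↔
      ¬ ((∀ k : Fin n, 0 < (k : ℕ) → (k : ℕ) < n - 1 → a k ≠ a i0) ∧
        1 / a iN ≠
          (∑ k ∈ Finset.univ.filter (fun k : Fin n => 0 < (k : ℕ) ∧ (k : ℕ) < n - 1),
            1 / a k) - ((n : ℂ) - 3) / a i0) := by
    constructor
    · rintro ⟨v, hv, hMv⟩ ⟨hA, hB⟩
      set S : ℂ := ∑ j ∈ F, a j * v j with hS
      have hMv' : ∀ i, M.mulVec v i = 0 := fun i => congrFun hMv i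
      have hNveq : a iN * v iN = -S := by
        have h1 := keyrow v i0 hi0F
        rw [hMv' i0, mul_zero] at h1
        have h2 : a i0 * (S + a iN * v iN) = 0 := by linear_combination -h1
        have h3 := (mul_eq_zero.1 h2).resolve_left (hane i0)
        linear_combination h3
      have hvi : ∀ i ∈ F.erase i0, a i * v i = S := by
        intro i hi
        obtain ⟨hii0, hiF⟩ := Finset.mem_erase.1 hi
        have hi' : (i : ℕ) < n - 1 := (hFmem i).1 hiF
        have hipos : 0 < (i : ℕ) := by
          have h1 : (i : ℕ) ≠ 0 := fun hc => hii0 (Fin.ext (by rw [h0]; exact hc))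
          omega
        have hai : a i ≠ a i0 := hA i hipos hi'
        have h1 := keyrow v i hiF
        rw [hMv' i, mul_zero, hNveq] at h1
        have h2 : (a i0 - a i) * (a i * v i - S) = 0 := by linear_combination -h1
        have h3 := (mul_eq_zero.1 h2).resolve_left (sub_ne_zero.2 (Ne.symm hai))
        linear_combination h3
      have hvi0 : a i0 * v i0 = (3 - (n : ℂ)) * S := by
        have h1 : S = (∑ j ∈ F.erase i0, a j * v j) + a i0 * v i0 :=
          (Finset.sum_erase_add F _ hi0F).symm
        rw [Finset.sum_congr rfl hvi, Finset.sum_const, nsmul_eq_mul, hc2] at h1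
        linear_combination -h1
      have hsum0 : ∑ j, v j = 0 := by
        have h1 := rowN v
        rw [hMv' iN] at h1
        exact (mul_eq_zero.1 h1.symm).resolve_left (hane iN)
      have hS0 : S = 0 := by
        by_contra hS0
        apply hB
        have e1 : ∑ j ∈ F.erase i0, v j = (∑ j ∈ F.erase i0, 1 / a j) * S := by
          rw [Finset.sum_mul]
          refine Finset.sum_congr rfl fun j hj => ?_
          have hja := hane j
          field_simp
          linear_combination hvi j hj
        have e2 : v i0 = (3 - (n : ℂ)) / a i0 * S := by
          have hja := hane i0
          field_simp
          linear_combination hvi0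
        have e3 : v iN = -(1 / a iN) * S := by
          have hja := hane iN
          field_simp
          linear_combination hNveq
        have h4 := hsum0
        rw [hsplit v, ← Finset.sum_erase_add F v hi0F, e1, e2, e3] at h4
        have h6 : (1 / a iN - ((∑ j ∈ F.erase i0, 1 / a j) - ((n : ℂ) - 3) / a i0)) * S
            = 0 := by linear_combination -h4
        have h7 := (mul_eq_zero.1 h6).resolve_right hS0
        rw [hFerase]
        linear_combination h7
      exact hv (funext fun j => by
        rcases eq_or_ne j iN with rfl | hjN
        · have h1 := hNveq
          rw [hS0, neg_zero] at h1
          simpa using (mul_eq_zero.1 h1).resolve_left (hane j)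
        · rcases eq_or_ne j i0 with rfl | hj0
          · have h1 := hvi0
            rw [hS0, mul_zero] at h1
            simpa using (mul_eq_zero.1 h1).resolve_left (hane j)
          · have hjF : j ∈ F := (hFmem j).2 (hvalN j hjN)
            have h1 := hvi j (Finset.mem_erase.2 ⟨hj0, hjF⟩)
            rw [hS0] at h1
            simpa using (mul_eq_zero.1 h1).resolve_left (hane j))
    · intro hC
      rw [not_and_or] at hC
      rcases hC with hC | hC
      · push_neg at hC
        obtain ⟨k, hk0, hk1, hk⟩ := hC
        have hki0 : k ≠ i0 := by
          intro hc; rw [hc, h0] at hk0; exact lt_irrefl 0 hk0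
        refine ⟨Pi.single i0 1 - Pi.single k 1, ?_, ?_⟩
        · intro hc
          have h1 := congrFun hc i0
          simp [Pi.single_apply, hki0.symm] at h1
        · rw [Matrix.mulVec_sub, Matrix.mulVec_single_one, Matrix.mulVec_single_one]
          funext i
          simp only [Pi.sub_apply, mul_one, Pi.zero_apply, Matrix.col_apply]
          rw [sub_eq_zero]
          rcases eq_or_ne i iN with rfl | hiN'
          · rw [hrowN, hrowN]
          · have hi' : (i : ℕ) < n - 1 := hvalN i hiN'
            have hi0lt : (i0 : ℕ) < n - 1 := by rw [h0]; omega
            apply mul_left_cancel₀ (hane i0)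
            by_cases hii0 : i = i0
            · rw [hii0, hdiag, hoff i0 k hki0.symm hi0lt hk1, hk]
            · by_cases hik : i = k
              · rw [hik, hdiag, hoff k i0 hki0 hk1 hi0lt, hk]
              · rw [hoff i i0 hii0 hi' hi0lt, hoff i k hik hi' hk1, hk]
      · push_neg at hC
        rw [hFerase] at hC
        set w : Fin n → ℂ := fun j =>
          if j = iN then -(1 / a iN) else if j = i0 then -(((n : ℂ) - 3) / a i0) else 1 / a j
          with hw
        have hwN : w iN = -(1 / a iN) := by simp [hw]
        have hw0 : w i0 = -(((n : ℂ) - 3) / a i0) := by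
          have h1 : i0 ≠ iN := by
            intro hc; rw [hc, hNv] at h0; omega
          simp [hw, h1]
        have hwo : ∀ j ∈ F.erase i0, w j = 1 / a j := by
          intro j hj
          obtain ⟨hj0, hjF⟩ := Finset.mem_erase.1 hj
          have h1 : j ≠ iN := by
            intro hc
            have h2 := (hFmem j).1 hjF
            rw [hc, hNv] at h2
            omega
          simp [hw, h1, hj0]
        refine ⟨w, ?_, ?_⟩
        · intro hc
          have h1 := congrFun hc iN
          rw [hwN, Pi.zero_apply, neg_eq_zero] at h1
          exact one_div_ne_zero (hane iN) h1
        · funext i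
          simp only [Pi.zero_apply]
          rcases eq_or_ne i iN with rfl | hiN'
          · rw [rowN w]
            have hsum : ∑ j, w j = 0 := by
              rw [hsplit w, ← Finset.sum_erase_add F w hi0F,
                Finset.sum_congr rfl hwo, hw0, hwN]
              linear_combination -hC
            rw [hsum, mul_zero]
          · have hiF : i ∈ F := (hFmem i).2 (hvalN i hiN')
            apply mul_left_cancel₀ (hane i0)
            rw [keyrow w i hiF, mul_zero]
            have eS : ∑ j ∈ F, a j * w j = 1 := by
              rw [← Finset.sum_erase_add F _ hi0F]
              have e1 : ∀ j ∈ F.erase i0, a j * w j = 1 := by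
                intro j hj
                rw [hwo j hj, mul_one_div, div_self (hane j)]
              rw [Finset.sum_congr rfl e1, Finset.sum_const, nsmul_eq_mul, hc2, hw0]
              have e2 : a i0 * -(((n : ℂ) - 3) / a i0) = -((n : ℂ) - 3) := by
                field_simp [hane i0]
              rw [e2]
              ring
            have eN : a iN * w iN = -1 := by
              rw [hwN]
              field_simp [hane iN]
            rw [eS, eN]
            rcases eq_or_ne i i0 with rfl | hii0
            · ring
            · have e4 : w i = 1 / a i := by
                simp only [hw]
                rw [if_neg hiN', if_neg hii0]
              rw [e4]
              have e5 : (a i0 - a i) * a i * (1 / a i) = a i0 - a i := by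
                field_simp [hane i]
              rw [e5]
              ring
  rw [Matrix.isUnit_iff_isUnit_det, isUnit_iff_ne_zero, Ne,
    ← Matrix.exists_mulVec_eq_zero_iff, hmain, not_not]

/-- Theorem 3.4: Let `n ≥ 3`, let `S = {x_1, …, x_n}` be a set of `n` distinct
elements of a lattice `P` with finite principal order ideals such that `x_i ⊓ x_j = x_1` for all
distinct `i, j ≤ n−1` and `x_1 ⊔ ⋯ ⊔ x_{n−1} ≤ x_n`, and let `f` be semimultiplicative with
nonzero values. Then `[S]_f` is invertible iff `f(x_k) ≠ f(x_1)` for `k = 2, …, n−1` and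
`1/f(x_n) ≠ (Σ_{k=2}^{n−1} 1/f(x_k)) − (n−3)/f(x_1)`.
(Here `Fin n` is 0-indexed: `x ⟨0,_⟩` is `x_1` and `x ⟨n-1,_⟩` is `x_n`.) -/
theorem joinMatrix_x1set_plus_top_isUnit_iff
    {P : Type*} [Lattice P] (hfin : ∀ q : P, {y : P | y ≤ q}.Finite)
    (f : P → ℂ) (hsemi : ∀ a b : P, f a * f b = f (a ⊓ b) * f (a ⊔ b))
    (hne : ∀ a : P, f a ≠ 0)
    {n : ℕ} (hn : 3 ≤ n) (x : Fin n → P) (hinj : Function.Injective x)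
    (hx1 : ∀ i j : Fin n, i ≠ j → (i : ℕ) < n - 1 → (j : ℕ) < n - 1 →
      x i ⊓ x j = x ⟨0, by omega⟩)
    (htop : ∀ i : Fin n, (i : ℕ) < n - 1 → x i ≤ x ⟨n - 1, by omega⟩) :
    IsUnit (Matrix.of fun i j : Fin n => f (x i ⊔ x j)) ↔
      ((∀ k : Fin n, 0 < (k : ℕ) → (k : ℕ) < n - 1 → f (x k) ≠ f (x ⟨0, by omega⟩)) ∧
        1 / f (x ⟨n - 1, by omega⟩) ≠
          (∑ k ∈ Finset.univ.filter (fun k : Fin n => 0 < (k : ℕ) ∧ (k : ℕ) < n - 1),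
            1 / f (x k)) - ((n : ℂ) - 3) / f (x ⟨0, by omega⟩)) := by
  have h0 : 0 < n := by omega
  have hN : n - 1 < n := by omega
  set i0 : Fin n := ⟨0, h0⟩ with hi0
  set iN : Fin n := ⟨n - 1, hN⟩ with hiN
  have hdiag : ∀ i : Fin n, (Matrix.of fun i j : Fin n => f (x i ⊔ x j)) i i = f (x i) := by
    intro i; simp
  have hcolN : ∀ i : Fin n, (Matrix.of fun i j : Fin n => f (x i ⊔ x j)) i iN = f (x iN) := by
    intro i
    rcases eq_or_ne i iN with h | h
    · subst h; simp
    · have hi' : (i : ℕ) < n - 1 := by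
        have h1 := i.isLt
        have h2 : (i : ℕ) ≠ n - 1 := fun hc => h (Fin.ext hc)
        omega
      simp only [Matrix.of_apply]
      rw [sup_eq_right.2 (htop i hi')]
  have hrowN : ∀ j : Fin n, (Matrix.of fun i j : Fin n => f (x i ⊔ x j)) iN j = f (x iN) := by
    intro j
    rcases eq_or_ne j iN with h | h
    · subst h; simp
    · have hj' : (j : ℕ) < n - 1 := by
        have h1 := j.isLt
        have h2 : (j : ℕ) ≠ n - 1 := fun hc => h (Fin.ext hc)
        omega
      simp only [Matrix.of_apply]
      rw [sup_eq_left.2 (htop j hj')]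
  have hoff : ∀ i j : Fin n, i ≠ j → (i : ℕ) < n - 1 → (j : ℕ) < n - 1 →
      f (x i0) * (Matrix.of fun i j : Fin n => f (x i ⊔ x j)) i j = f (x i) * f (x j) := by
    intro i j hij hi hj
    simp only [Matrix.of_apply]
    rw [← hx1 i j hij hi hj, ← hsemi]
  exact aux_joinMatrix hn i0 iN rfl rfl (fun i => f (x i)) _ (fun i => hne (x i))
    hdiag hcolN hrowN hoff
end

section
/- (Corollary 4.1, second part) If S is a gcd-closed set of distinct positive integers with at most 5 elements, then the LCM matrix [S] is invertible. -/
open Finset Matrix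

noncomputable def alph (S : Finset ℕ) (x : ℕ) : ℚ :=
  (x : ℚ)⁻¹ - ∑ y ∈ (S.filter fun y => y ∣ x ∧ y < x).attach, alph S (y : ℕ)
termination_by x
decreasing_by
  have := y.2
  simp only [Finset.mem_filter] at this
  exact this.2.2

lemma alph_def (S : Finset ℕ) (x : ℕ) :
    alph S x = (x : ℚ)⁻¹ - ∑ y ∈ S.filter (fun y => y ∣ x ∧ y < x), alph S y := by
  rw [alph, Finset.sum_attach]

lemma sum_alph (S : Finset ℕ) {x : ℕ} (hx : x ∈ S) (hxpos : 0 < x) :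
    ∑ y ∈ S.filter (· ∣ x), alph S y = (x : ℚ)⁻¹ := by
  have hsplit : S.filter (· ∣ x) = insert x (S.filter fun y => y ∣ x ∧ y < x) := by
    ext y
    simp only [mem_filter, mem_insert]
    constructor
    · rintro ⟨hyS, hyx⟩
      rcases eq_or_lt_of_le (Nat.le_of_dvd hxpos hyx) with h | h
      · exact Or.inl h
      · exact Or.inr ⟨hyS, hyx, h⟩
    · rintro (rfl | ⟨h1, h2, _⟩)
      · exact ⟨hx, dvd_refl _⟩
      · exact ⟨h1, h2⟩
  rw [hsplit, Finset.sum_insert (by simp), alph_def]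
  ring

lemma sum_alph_P (S : Finset ℕ) (hpos : ∀ a ∈ S, 0 < a) {x c : ℕ}
    (hc : c ∈ S) (hcx : c ∣ x) (hclt : c < x) :
    ∑ y ∈ (S.filter fun y => y ∣ x ∧ y < x).filter (· ∣ c), alph S y = (c:ℚ)⁻¹ := by
  have hs : (S.filter fun y => y ∣ x ∧ y < x).filter (· ∣ c) = S.filter (· ∣ c) := by
    ext y
    simp only [mem_filter]
    constructor
    · rintro ⟨⟨h1, _, _⟩, h4⟩; exact ⟨h1, h4⟩
    · rintro ⟨h1, h2⟩
      exact ⟨⟨h1, dvd_trans h2 hcx,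
        lt_of_le_of_lt (Nat.le_of_dvd (hpos c hc) h2) hclt⟩, h2⟩
  rw [hs, sum_alph S hc (hpos c hc)]

lemma arith_pair {b : ℕ} {u v : ℕ} (hb : 0 < b) (hu : 2 * b ≤ u) (hv : 3 * b ≤ v) :
    (u : ℚ)⁻¹ + (v : ℚ)⁻¹ < (b : ℚ)⁻¹ := by
  have hb' : (0 : ℚ) < b := by exact_mod_cast hb
  have h2b : (0 : ℚ) < 2 * b := by linarith
  have h3b : (0 : ℚ) < 3 * b := by linarith
  have hu' : (2 * b : ℚ) ≤ u := by exact_mod_cast hu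
  have hv' : (3 * b : ℚ) ≤ v := by exact_mod_cast hv
  have h1 : (u : ℚ)⁻¹ ≤ (2 * (b:ℚ))⁻¹ := inv_anti₀ h2b hu'
  have h2 : (v : ℚ)⁻¹ ≤ (3 * (b:ℚ))⁻¹ := inv_anti₀ h3b hv'
  have hbi : (0 : ℚ) < (b:ℚ)⁻¹ := inv_pos.2 hb'
  have e1 : (2 * (b:ℚ))⁻¹ = 2⁻¹ * (b:ℚ)⁻¹ := by rw [mul_inv]
  have e2 : (3 * (b:ℚ))⁻¹ = 3⁻¹ * (b:ℚ)⁻¹ := by rw [mul_inv]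
  rw [e1] at h1; rw [e2] at h2
  nlinarith [hbi]

lemma arith2 {b c d x : ℕ} (hb : 0 < b) (hc : 0 < c) (hd : 0 < d) (hx : 0 < x)
    (hbc : b ∣ c) (hbd : b ∣ d) (hcb : b ≠ c) (hdb : b ≠ d) (hcd : c ≠ d) :
    (0:ℚ) < (x:ℚ)⁻¹ - (c:ℚ)⁻¹ - (d:ℚ)⁻¹ + (b:ℚ)⁻¹ := by
  obtain ⟨k, rfl⟩ := hbc
  obtain ⟨l, rfl⟩ := hbd
  have hk : 2 ≤ k := by
    rcases Nat.lt_or_ge k 2 with h | h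
    · interval_cases k <;> omega
    · exact h
  have hl : 2 ≤ l := by
    rcases Nat.lt_or_ge l 2 with h | h
    · interval_cases l <;> omega
    · exact h
  have hkl : k ≠ l := by rintro rfl; exact hcd rfl
  have hxi : (0 : ℚ) < (x:ℚ)⁻¹ := inv_pos.2 (by exact_mod_cast hx)
  have key : ((b*k : ℕ) : ℚ)⁻¹ + ((b*l : ℕ) : ℚ)⁻¹ < (b : ℚ)⁻¹ := by
    rcases Nat.lt_or_ge k l with h | h
    · exact arith_pair hb (by nlinarith) (by nlinarith)
    · have h' : l < k := lt_of_le_of_ne h (Ne.symm hkl)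
      rw [add_comm]
      exact arith_pair hb (by nlinarith) (by nlinarith)
  linarith

lemma arith3 {a c d e x : ℕ} (ha : 0 < a) (hx : 0 < x)
    (hc : 2 * a ≤ c) (hd : 2 * a ≤ d) (he : 2 * a ≤ e) :
    (0:ℚ) < (x:ℚ)⁻¹ - (c:ℚ)⁻¹ - (d:ℚ)⁻¹ - (e:ℚ)⁻¹ + 2 * (a:ℚ)⁻¹ := by
  have ha' : (0 : ℚ) < a := by exact_mod_cast ha
  have h2a : (0 : ℚ) < 2 * a := by linarith
  have hbd : ∀ u : ℕ, 2 * a ≤ u → (u : ℚ)⁻¹ ≤ (2 * (a:ℚ))⁻¹ := by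
    intro u hu
    exact inv_anti₀ h2a (by exact_mod_cast hu)
  have h1 := hbd c hc
  have h2 := hbd d hd
  have h3 := hbd e he
  have e1 : (2 * (a:ℚ))⁻¹ = 2⁻¹ * (a:ℚ)⁻¹ := by rw [mul_inv]
  rw [e1] at h1 h2 h3
  have hai : (0 : ℚ) < (a:ℚ)⁻¹ := inv_pos.2 ha'
  have hxi : (0 : ℚ) < (x:ℚ)⁻¹ := inv_pos.2 (by exact_mod_cast hx)
  nlinarith

lemma two_mul_le {a c : ℕ} (hc : 0 < c) (hd : a ∣ c) (hne : a ≠ c) : 2 * a ≤ c := by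
  obtain ⟨k, rfl⟩ := hd
  have h2 : 2 ≤ k := by
    rcases Nat.lt_or_ge k 2 with h | h
    · interval_cases k <;> omega
    · exact h
  calc 2 * a = a * 2 := by ring
  _ ≤ a * k := Nat.mul_le_mul_left a h2

lemma alph_ne_zero (S : Finset ℕ) (hpos : ∀ a ∈ S, 0 < a)
    (hgcd : ∀ a ∈ S, ∀ b ∈ S, Nat.gcd a b ∈ S) (hcard : S.card ≤ 5)
    {x : ℕ} (hx : x ∈ S) : alph S x ≠ 0 := by
  classical
  have hxpos := hpos x hx
  set P := S.filter (fun y => y ∣ x ∧ y < x) with hP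
  have hPmem : ∀ y ∈ P, y ∈ S ∧ y ∣ x ∧ y < x := by
    intro y hy; rw [hP, mem_filter] at hy; exact ⟨hy.1, hy.2⟩
  have hPpos : ∀ y ∈ P, 0 < y := fun y hy => hpos y (hPmem y hy).1
  have hxP : x ∉ P := by
    intro h; exact absurd (hPmem x h).2.2 (lt_irrefl x)
  set M := P.filter (fun y => ∀ z ∈ P, y ∣ z → y = z) with hM
  have hMP : M ⊆ P := filter_subset _ _
  have hMmax : ∀ m ∈ M, ∀ z ∈ P, m ∣ z → m = z := by
    intro m hm; rw [hM, mem_filter] at hm; exact hm.2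
  -- every element of P divides a maximal element
  have hmax : ∀ y ∈ P, ∃ m ∈ M, y ∣ m := by
    intro y hy
    have hne : (P.filter (y ∣ ·)).Nonempty := ⟨y, mem_filter.2 ⟨hy, dvd_refl y⟩⟩
    set m := (P.filter (y ∣ ·)).max' hne with hm
    have hmmem := (P.filter (y ∣ ·)).max'_mem hne
    rw [mem_filter] at hmmem
    refine ⟨m, ?_, hmmem.2⟩
    rw [hM, mem_filter]
    refine ⟨hmmem.1, fun z hz hmz => ?_⟩
    have hzmem : z ∈ P.filter (y ∣ ·) := mem_filter.2 ⟨hz, dvd_trans hmmem.2 hmz⟩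
    have h1 : z ≤ m := le_max' _ _ hzmem
    have h2 : m ≤ z := Nat.le_of_dvd (hPpos z hz) hmz
    omega
  -- gcd of distinct maximal elements
  have hgcdM : ∀ c ∈ M, ∀ d ∈ M, c ≠ d →
      Nat.gcd c d ∈ P ∧ Nat.gcd c d ∉ M := by
    intro c hc d hd hcd
    have hcP := hMP hc; have hdP := hMP hd
    obtain ⟨hcS, hcx, hclt⟩ := hPmem c hcP
    have hgS : Nat.gcd c d ∈ S := hgcd c hcS d (hPmem d hdP).1
    have hgP : Nat.gcd c d ∈ P := by
      rw [hP, mem_filter]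
      exact ⟨hgS, dvd_trans (Nat.gcd_dvd_left _ _) hcx,
        lt_of_le_of_lt (Nat.le_of_dvd (hpos c hcS) (Nat.gcd_dvd_left _ _)) hclt⟩
    refine ⟨hgP, fun hgM => ?_⟩
    have h1 : Nat.gcd c d = c := hMmax _ hgM c hcP (Nat.gcd_dvd_left _ _)
    have h2 : c = d := hMmax _ hc d hdP (h1 ▸ Nat.gcd_dvd_right c d)
    exact hcd h2
  have hPS : P.card + 1 ≤ S.card := by
    have hsub : insert x P ⊆ S := by
      intro y hy
      rcases mem_insert.1 hy with rfl | hy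
      · exact hx
      · exact (hPmem y hy).1
    have := card_le_card hsub
    rwa [card_insert_of_notMem hxP] at this
  have hMcard : M.card ≤ 3 := by
    by_contra h
    push_neg at h
    have h4 : 1 < M.card := by omega
    obtain ⟨c, hc, d, hd, hcd⟩ := Finset.one_lt_card.mp h4
    obtain ⟨hgP, hgM⟩ := hgcdM c hc d hd hcd
    have hsub : insert (Nat.gcd c d) M ⊆ P := by
      intro y hy
      rcases mem_insert.1 hy with rfl | hy
      · exact hgP
      · exact hMP hy
    have h2 := card_le_card hsub
    rw [card_insert_of_notMem hgM] at h2
    omega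
  have halph : alph S x = (x:ℚ)⁻¹ - ∑ y ∈ P, alph S y := by
    rw [alph_def, hP]
  have hxq : (0:ℚ) < (x:ℚ)⁻¹ := inv_pos.2 (by exact_mod_cast hxpos)
  obtain h0 | h1 | h2 | h3 : M.card = 0 ∨ M.card = 1 ∨ M.card = 2 ∨ M.card = 3 := by
    omega
  -- CASE 0 : no maximal elements, P empty
  · have hMe : M = ∅ := card_eq_zero.mp h0
    have hPe : P = ∅ := by
      rw [eq_empty_iff_forall_notMem]
      intro y hy
      obtain ⟨m, hm, _⟩ := hmax y hy
      rw [hMe] at hm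
      exact absurd hm (notMem_empty m)
    rw [halph, hPe, sum_empty]
    intro h; rw [sub_zero] at h; exact absurd h (ne_of_gt hxq)
  -- CASE 1 : one maximal element c
  · obtain ⟨c, hMc⟩ := card_eq_one.mp h1
    have hcM : c ∈ M := by rw [hMc]; exact mem_singleton_self c
    obtain ⟨hcS, hcx, hclt⟩ := hPmem c (hMP hcM)
    have hall : P.filter (· ∣ c) = P := by
      apply filter_true_of_mem
      intro y hy
      obtain ⟨m, hm, hym⟩ := hmax y hy
      rw [hMc, mem_singleton] at hm
      exact hm ▸ hym
    have hsum : ∑ y ∈ P, alph S y = (c:ℚ)⁻¹ := by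
      rw [← hall, hP]
      exact sum_alph_P S hpos hcS hcx hclt
    rw [halph, hsum]
    have hlt : (x:ℚ)⁻¹ < (c:ℚ)⁻¹ := by
      apply inv_strictAnti₀ (by exact_mod_cast hpos c hcS) (by exact_mod_cast hclt)
    intro h; linarith
  -- CASE 2 : two maximal elements
  · obtain ⟨c, d, hcd, hMcd⟩ := card_eq_two.mp h2
    have hcM : c ∈ M := by rw [hMcd]; simp
    have hdM : d ∈ M := by rw [hMcd]; simp
    obtain ⟨hcS, hcx, hclt⟩ := hPmem c (hMP hcM)
    obtain ⟨hdS, hdx, hdlt⟩ := hPmem d (hMP hdM)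
    obtain ⟨hbP, hbM⟩ := hgcdM c hcM d hdM hcd
    set b := Nat.gcd c d with hb
    obtain ⟨hbS, hbx, hblt⟩ := hPmem b hbP
    have hbc : b ∣ c := Nat.gcd_dvd_left c d
    have hbd : b ∣ d := Nat.gcd_dvd_right c d
    have hbnec : b ≠ c := by
      intro h
      exact hcd (hMmax c hcM d (hMP hdM) (h ▸ hbd))
    have hbned : b ≠ d := by
      intro h
      exact hcd (hMmax d hdM c (hMP hcM) (h ▸ hbc)).symm
    -- sum computations
    have hsc : ∑ y ∈ P.filter (· ∣ c), alph S y = (c:ℚ)⁻¹ := by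
      rw [hP]; exact sum_alph_P S hpos hcS hcx hclt
    have hsd : ∑ y ∈ P.filter (· ∣ d), alph S y = (d:ℚ)⁻¹ := by
      rw [hP]; exact sum_alph_P S hpos hdS hdx hdlt
    have hsb : ∑ y ∈ P.filter (· ∣ b), alph S y = (b:ℚ)⁻¹ := by
      rw [hP]; exact sum_alph_P S hpos hbS hbx hblt
    have hsplit1 := Finset.sum_filter_add_sum_filter_not P (· ∣ c) (alph S)
    have hsplit2 := Finset.sum_filter_add_sum_filter_not (P.filter (· ∣ d)) (· ∣ c) (alph S)
    have heq1 : (P.filter (· ∣ d)).filter (· ∣ c) = P.filter (· ∣ b) := by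
      ext y
      simp only [mem_filter]
      constructor
      · rintro ⟨⟨hy, hyd⟩, hyc⟩
        exact ⟨hy, Nat.dvd_gcd hyc hyd⟩
      · rintro ⟨hy, hyb⟩
        exact ⟨⟨hy, dvd_trans hyb hbd⟩, dvd_trans hyb hbc⟩
    have heq2 : (P.filter (· ∣ d)).filter (fun y => ¬ y ∣ c) = P.filter (fun y => ¬ y ∣ c) := by
      ext y
      simp only [mem_filter]
      constructor
      · rintro ⟨⟨hy, _⟩, hnc⟩; exact ⟨hy, hnc⟩
      · rintro ⟨hy, hnc⟩
        refine ⟨⟨hy, ?_⟩, hnc⟩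
        obtain ⟨m, hm, hym⟩ := hmax y hy
        rw [hMcd, mem_insert, mem_singleton] at hm
        rcases hm with rfl | rfl
        · exact absurd hym hnc
        · exact hym
    rw [heq1, heq2, hsd, hsb] at hsplit2
    rw [hsc] at hsplit1
    rw [halph]
    have harith := arith2 (hpos b hbS) (hpos c hcS) (hpos d hdS) hxpos
      hbc hbd hbnec hbned hcd
    intro hzero
    have : ∑ y ∈ P, alph S y = (c:ℚ)⁻¹ + ((d:ℚ)⁻¹ - (b:ℚ)⁻¹) := by linarith
    rw [this] at hzero
    linarith
  -- CASE 3 : three maximal elements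
  · obtain ⟨c, d, e, hcd, hce, hde, hMcde⟩ := card_eq_three.mp h3
    have hcM : c ∈ M := by rw [hMcde]; simp
    have hdM : d ∈ M := by rw [hMcde]; simp
    have heM : e ∈ M := by rw [hMcde]; simp
    obtain ⟨hcS, hcx, hclt⟩ := hPmem c (hMP hcM)
    obtain ⟨hdS, hdx, hdlt⟩ := hPmem d (hMP hdM)
    obtain ⟨heS, hex, helt⟩ := hPmem e (hMP heM)
    obtain ⟨hgP1, hgM1⟩ := hgcdM c hcM d hdM hcd
    obtain ⟨hgP2, hgM2⟩ := hgcdM c hcM e heM hce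
    obtain ⟨hgP3, hgM3⟩ := hgcdM d hdM e heM hde
    -- all pairwise gcds coincide, via cardinality
    have hPM1 : (P \ M).card ≤ 1 := by
      have h1 : (P \ M).card = P.card - M.card := card_sdiff_of_subset hMP
      omega
    have hmem1 : Nat.gcd c d ∈ P \ M := mem_sdiff.2 ⟨hgP1, hgM1⟩
    have hmem2 : Nat.gcd c e ∈ P \ M := mem_sdiff.2 ⟨hgP2, hgM2⟩
    have hmem3 : Nat.gcd d e ∈ P \ M := mem_sdiff.2 ⟨hgP3, hgM3⟩
    have hce_eq : Nat.gcd c e = Nat.gcd c d :=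
      Finset.card_le_one.mp hPM1 _ hmem2 _ hmem1
    have hde_eq : Nat.gcd d e = Nat.gcd c d :=
      Finset.card_le_one.mp hPM1 _ hmem3 _ hmem1
    set a := Nat.gcd c d with ha
    obtain ⟨haS, hax, halt⟩ := hPmem a hgP1
    have hac : a ∣ c := Nat.gcd_dvd_left c d
    have had : a ∣ d := Nat.gcd_dvd_right c d
    have hae : a ∣ e := hde_eq ▸ Nat.gcd_dvd_right d e
    have hanec : a ≠ c := fun h => hgM1 (h ▸ hcM)
    have haned : a ≠ d := fun h => hgM1 (h ▸ hdM)
    have hanee : a ≠ e := fun h => hgM1 (h ▸ heM)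
    -- partial sums
    have hsc : ∑ y ∈ P.filter (· ∣ c), alph S y = (c:ℚ)⁻¹ := by
      rw [hP]; exact sum_alph_P S hpos hcS hcx hclt
    have hsd : ∑ y ∈ P.filter (· ∣ d), alph S y = (d:ℚ)⁻¹ := by
      rw [hP]; exact sum_alph_P S hpos hdS hdx hdlt
    have hse : ∑ y ∈ P.filter (· ∣ e), alph S y = (e:ℚ)⁻¹ := by
      rw [hP]; exact sum_alph_P S hpos heS hex helt
    have hsa : ∑ y ∈ P.filter (· ∣ a), alph S y = (a:ℚ)⁻¹ := by
      rw [hP]; exact sum_alph_P S hpos haS hax halt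
    -- split P by divisibility by c
    have hsplit1 := Finset.sum_filter_add_sum_filter_not P (· ∣ c) (alph S)
    -- split the non-c part by divisibility by d
    have hsplit2 := Finset.sum_filter_add_sum_filter_not
      (P.filter (fun y => ¬ y ∣ c)) (· ∣ d) (alph S)
    -- split divisors of d by divisibility by c
    have hsplit3 := Finset.sum_filter_add_sum_filter_not (P.filter (· ∣ d)) (· ∣ c) (alph S)
    -- split divisors of e by divisibility by c or d
    have hsplit4 := Finset.sum_filter_add_sum_filter_not
      (P.filter (· ∣ e)) (fun y => y ∣ c ∨ y ∣ d) (alph S)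
    have heq1 : (P.filter (· ∣ d)).filter (· ∣ c) = P.filter (· ∣ a) := by
      ext y
      simp only [mem_filter]
      constructor
      · rintro ⟨⟨hy, hyd⟩, hyc⟩
        exact ⟨hy, Nat.dvd_gcd hyc hyd⟩
      · rintro ⟨hy, hyb⟩
        exact ⟨⟨hy, dvd_trans hyb had⟩, dvd_trans hyb hac⟩
    have heq2 : (P.filter (· ∣ d)).filter (fun y => ¬ y ∣ c)
        = (P.filter (fun y => ¬ y ∣ c)).filter (· ∣ d) := by
      ext y
      simp only [mem_filter]
      tauto
    have heq3 : (P.filter (· ∣ e)).filter (fun y => y ∣ c ∨ y ∣ d) = P.filter (· ∣ a) := by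
      ext y
      simp only [mem_filter]
      constructor
      · rintro ⟨⟨hy, hye⟩, hcd'⟩
        rcases hcd' with hyc | hyd
        · exact ⟨hy, hce_eq ▸ Nat.dvd_gcd hyc hye⟩
        · exact ⟨hy, hde_eq ▸ Nat.dvd_gcd hyd hye⟩
      · rintro ⟨hy, hyb⟩
        exact ⟨⟨hy, dvd_trans hyb hae⟩, Or.inl (dvd_trans hyb hac)⟩
    have heq4 : (P.filter (· ∣ e)).filter (fun y => ¬ (y ∣ c ∨ y ∣ d))
        = (P.filter (fun y => ¬ y ∣ c)).filter (fun y => ¬ y ∣ d) := by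
      ext y
      simp only [mem_filter]
      constructor
      · rintro ⟨⟨hy, _⟩, hn⟩
        push_neg at hn
        exact ⟨⟨hy, hn.1⟩, hn.2⟩
      · rintro ⟨⟨hy, hnc⟩, hnd⟩
        refine ⟨⟨hy, ?_⟩, ?_⟩
        · obtain ⟨m, hm, hym⟩ := hmax y hy
          rw [hMcde] at hm
          simp only [mem_insert, mem_singleton] at hm
          rcases hm with rfl | rfl | rfl
          · exact absurd hym hnc
          · exact absurd hym hnd
          · exact hym
        · push_neg
          exact ⟨hnc, hnd⟩
    rw [heq1] at hsplit3
    rw [heq3] at hsplit4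
    rw [hsd, hsa] at hsplit3
    rw [hse, hsa] at hsplit4
    rw [heq2] at hsplit3
    rw [heq4] at hsplit4
    rw [hsc] at hsplit1
    rw [halph]
    have h2c : 2 * a ≤ c := two_mul_le (hpos c hcS) hac hanec
    have h2d : 2 * a ≤ d := two_mul_le (hpos d hdS) had haned
    have h2e : 2 * a ≤ e := two_mul_le (hpos e heS) hae hanee
    have harith := arith3 (hpos a haS) hxpos h2c h2d h2e
    intro hzero
    have hsum : ∑ y ∈ P, alph S y
        = (c:ℚ)⁻¹ + ((d:ℚ)⁻¹ - (a:ℚ)⁻¹) + ((e:ℚ)⁻¹ - (a:ℚ)⁻¹) := by linarith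
    rw [hsum] at hzero
    linarith


/-- If `S` is a gcd-closed set of distinct positive integers with at most 5
elements, then the LCM matrix `[S]` is invertible. -/
theorem lcmMatrix_gcdClosed_card_le_five_isUnit
    (S : Finset ℕ) (hpos : ∀ a ∈ S, 0 < a)
    (hgcd : ∀ a ∈ S, ∀ b ∈ S, Nat.gcd a b ∈ S)
    (hcard : S.card ≤ 5) :
    IsUnit (Matrix.of fun i j : ↥S => (Nat.lcm (i : ℕ) (j : ℕ) : ℚ)) := by
  classical
  set E : Matrix ↥S ↥S ℚ :=
    Matrix.of (fun i j : ↥S => if (j:ℕ) ∣ (i:ℕ) then (1:ℚ) else 0) with hE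
  set D : Matrix ↥S ↥S ℚ := Matrix.diagonal (fun i : ↥S => alph S (i:ℕ)) with hD
  set Dg : Matrix ↥S ↥S ℚ := Matrix.diagonal (fun i : ↥S => ((i:ℕ):ℚ)) with hDg
  have hgcd_entry : ∀ i j : ↥S,
      (E * D * Eᵀ) i j = ((Nat.gcd (i:ℕ) (j:ℕ) : ℕ) : ℚ)⁻¹ := by
    intro i j
    have hgS : Nat.gcd (i:ℕ) (j:ℕ) ∈ S := hgcd _ i.2 _ j.2
    have hgpos : 0 < Nat.gcd (i:ℕ) (j:ℕ) :=
      Nat.gcd_pos_of_pos_left _ (hpos _ i.2)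
    have h1 : (E * D * Eᵀ) i j
        = ∑ k : ↥S, (if (k:ℕ) ∣ (i:ℕ) then (1:ℚ) else 0) * alph S (k:ℕ)
            * (if (k:ℕ) ∣ (j:ℕ) then (1:ℚ) else 0) := by
      rw [Matrix.mul_apply]
      apply Finset.sum_congr rfl
      intro k _
      rw [Matrix.mul_diagonal]
      simp [hE]
    have h2 : (E * D * Eᵀ) i j
        = ∑ k : ↥S, (if (k:ℕ) ∣ Nat.gcd (i:ℕ) (j:ℕ) then alph S (k:ℕ) else 0) := by
      rw [h1]
      apply Finset.sum_congr rfl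
      intro k _
      by_cases hki : (k:ℕ) ∣ (i:ℕ) <;> by_cases hkj : (k:ℕ) ∣ (j:ℕ) <;>
        simp [hki, hkj, Nat.dvd_gcd_iff]
    rw [h2, Finset.sum_coe_sort S (fun n => if n ∣ Nat.gcd (i:ℕ) (j:ℕ) then alph S n else 0),
      ← Finset.sum_filter]
    exact sum_alph S hgS hgpos
  have hL : (Matrix.of fun i j : ↥S => (Nat.lcm (i : ℕ) (j : ℕ) : ℚ))
      = Dg * (E * D * Eᵀ) * Dg := by
    ext i j
    have h3 : (Dg * (E * D * Eᵀ) * Dg) i j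
        = ((i:ℕ):ℚ) * ((E * D * Eᵀ) i j) * ((j:ℕ):ℚ) := by
      rw [Matrix.mul_diagonal, Matrix.diagonal_mul]
    rw [h3, hgcd_entry i j]
    have hgpos : 0 < Nat.gcd (i:ℕ) (j:ℕ) :=
      Nat.gcd_pos_of_pos_left _ (hpos _ i.2)
    have hgne : ((Nat.gcd (i:ℕ) (j:ℕ) : ℕ) : ℚ) ≠ 0 := by
      exact_mod_cast hgpos.ne'
    have hmul : ((Nat.gcd (i:ℕ) (j:ℕ) : ℕ) : ℚ) * ((Nat.lcm (i:ℕ) (j:ℕ) : ℕ) : ℚ)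
        = ((i:ℕ):ℚ) * ((j:ℕ):ℚ) := by
      exact_mod_cast congrArg (Nat.cast : ℕ → ℚ) (Nat.gcd_mul_lcm (i:ℕ) (j:ℕ))
    simp only [Matrix.of_apply]
    field_simp
    linarith [hmul]
  rw [hL]
  have hdetE : E.det = 1 := by
    rw [Matrix.det_of_lowerTriangular E ?tri]
    case tri =>
      intro i j hij
      simp only [hE, Matrix.of_apply, ite_eq_right_iff]
      intro hdvd
      have h1 : (j:ℕ) ≤ (i:ℕ) := Nat.le_of_dvd (hpos _ i.2) hdvd
      have h2 : (i:ℕ) < (j:ℕ) := hij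
      omega
    simp [hE]
  have hE_unit : IsUnit E :=
    (Matrix.isUnit_iff_isUnit_det E).2 (by rw [hdetE]; exact isUnit_one)
  have hET_unit : IsUnit Eᵀ :=
    (Matrix.isUnit_iff_isUnit_det _).2
      (by rw [Matrix.det_transpose, hdetE]; exact isUnit_one)
  have hD_unit : IsUnit D := by
    apply (Matrix.isUnit_iff_isUnit_det _).2
    rw [hD, Matrix.det_diagonal]
    rw [isUnit_iff_ne_zero]
    apply Finset.prod_ne_zero_iff.2
    intro k _
    exact alph_ne_zero S hpos hgcd hcard k.2
  have hDg_unit : IsUnit Dg := by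
    apply (Matrix.isUnit_iff_isUnit_det _).2
    rw [hDg, Matrix.det_diagonal]
    rw [isUnit_iff_ne_zero]
    apply Finset.prod_ne_zero_iff.2
    intro k _
    exact_mod_cast (hpos _ k.2).ne'
  exact (hDg_unit.mul ((hE_unit.mul hD_unit).mul hET_unit)).mul hDg_unit
end

section
/- (Corollary 4.4, second part) If S is a gcd-closed set of distinct positive integers with exactly 6 elements, then the LCM matrix [S] is invertible. -/
open scoped Matrix

noncomputable def beta (S : Finset ℕ) (x : ℕ) : ℚ :=
  (x : ℚ)⁻¹ - ∑ y ∈ (S.filter fun y => y ∣ x ∧ y < x).attach, beta S y.1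
termination_by x
decreasing_by exact (Finset.mem_filter.mp y.2).2.2

theorem beta_spec (S : Finset ℕ) (x : ℕ) :
    beta S x = (x : ℚ)⁻¹ - ∑ y ∈ S.filter fun y => y ∣ x ∧ y < x, beta S y := by
  rw [beta, Finset.sum_attach]

theorem sum_beta (S : Finset ℕ) (z : ℕ) (hz : 0 < z) (hzS : z ∈ S) :
    ∑ y ∈ S.filter (· ∣ z), beta S y = (z : ℚ)⁻¹ := by
  have hset : S.filter (· ∣ z) = insert z (S.filter fun y => y ∣ z ∧ y < z) := by
    ext y
    simp only [Finset.mem_filter, Finset.mem_insert]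
    constructor
    · rintro ⟨hyS, hyz⟩
      rcases eq_or_lt_of_le (Nat.le_of_dvd hz hyz) with h | h
      · exact Or.inl h
      · exact Or.inr ⟨hyS, hyz, h⟩
    · rintro (rfl | ⟨h1, h2, h3⟩)
      · exact ⟨hzS, dvd_rfl⟩
      · exact ⟨h1, h2⟩
  rw [hset, Finset.sum_insert (by simp), beta_spec]
  ring

theorem sum_recip_le (z : ℕ) (hz : 0 < z) :
    ∀ (n : ℕ) (c : ℕ) (Y : Finset ℕ), 0 < c → Y.card = n →
      (∀ y ∈ Y, z ∣ y ∧ c * z ≤ y) →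
      ∑ y ∈ Y, ((y : ℚ))⁻¹ ≤ ∑ i ∈ Finset.range n, (((c + i) * z : ℕ) : ℚ)⁻¹ := by
  intro n
  induction n with
  | zero =>
    intro c Y _ hY _
    rw [Finset.card_eq_zero.mp hY]
    simp
  | succ n ih =>
    intro c Y hc hY hmem
    have hne : Y.Nonempty := Finset.card_pos.mp (by omega)
    set m := Y.min' hne with hm
    have hmY : m ∈ Y := Y.min'_mem hne
    have hmz : z ∣ m := (hmem m hmY).1
    have hmcz : c * z ≤ m := (hmem m hmY).2
    have herase : ∀ y ∈ Y.erase m, z ∣ y ∧ (c + 1) * z ≤ y := by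
      intro y hy
      have hyY : y ∈ Y := Finset.mem_of_mem_erase hy
      have hyz : z ∣ y := (hmem y hyY).1
      have hym : m ≤ y := Y.min'_le y hyY
      have hyne : y ≠ m := Finset.ne_of_mem_erase hy
      have hgt : c * z < y := lt_of_le_of_lt hmcz (lt_of_le_of_ne hym (Ne.symm hyne))
      obtain ⟨k, rfl⟩ := hyz
      have hgt' : z * c < z * k := by rwa [Nat.mul_comm c z] at hgt
      have hck : c < k := Nat.lt_of_mul_lt_mul_left hgt'
      refine ⟨Dvd.intro k rfl, ?_⟩
      calc (c + 1) * z ≤ k * z := Nat.mul_le_mul_right z hck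
        _ = z * k := Nat.mul_comm _ _
    have hcard' : (Y.erase m).card = n := by
      rw [Finset.card_erase_of_mem hmY, hY]
      omega
    have hIH := ih (c + 1) (Y.erase m) (by omega) hcard' herase
    have hsplit : ∑ y ∈ Y, ((y : ℚ))⁻¹
        = ((m : ℚ))⁻¹ + ∑ y ∈ Y.erase m, ((y : ℚ))⁻¹ := by
      rw [← Finset.add_sum_erase Y _ hmY]
    have hminv : ((m : ℚ))⁻¹ ≤ (((c * z : ℕ) : ℚ))⁻¹ := by
      apply inv_anti₀
      · positivity
      · exact_mod_cast hmcz
    have hrhs : ∑ i ∈ Finset.range (n + 1), (((c + i) * z : ℕ) : ℚ)⁻¹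
        = (((c * z : ℕ) : ℚ))⁻¹ + ∑ i ∈ Finset.range n, (((c + 1 + i) * z : ℕ) : ℚ)⁻¹ := by
      rw [Finset.sum_range_succ' (fun i => (((c + i) * z : ℕ) : ℚ)⁻¹) n]
      simp only [Nat.add_zero]
      rw [add_comm]
      congr 1
      apply Finset.sum_congr rfl
      intro i _
      have h : c + (i + 1) = c + 1 + i := by omega
      rw [h]
    rw [hsplit, hrhs]
    exact add_le_add hminv hIH

theorem two_mul_le_s11 (z a : ℕ) (h : z ∣ a) (hne : z ≠ a) (ha : 0 < a) : 2 * z ≤ a := by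
  obtain ⟨k, rfl⟩ := h
  have hk : k ≠ 0 := by rintro rfl; simp at ha
  have hk1 : k ≠ 1 := by rintro rfl; simp at hne
  have : 2 ≤ k := by omega
  calc 2 * z = z * 2 := Nat.mul_comm _ _
    _ ≤ z * k := Nat.mul_le_mul_left z this

theorem recip2 (z a b : ℕ) (hz : 0 < z) (hab : a ≠ b)
    (hza : z ∣ a) (hzb : z ∣ b) (ha : 2 * z ≤ a) (hb : 2 * z ≤ b) :
    (a : ℚ)⁻¹ + (b : ℚ)⁻¹ ≤ 5 / 6 * (z : ℚ)⁻¹ := by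
  have h := sum_recip_le z hz 2 2 {a, b} (by norm_num)
    (Finset.card_pair hab)
    (by intro y hy; simp only [Finset.mem_insert, Finset.mem_singleton] at hy
        rcases hy with rfl | rfl <;> exact ⟨by assumption, by assumption⟩)
  rw [Finset.sum_pair hab] at h
  have h2 : ∑ i ∈ Finset.range 2, (((2 + i) * z : ℕ) : ℚ)⁻¹ = 5 / 6 * (z : ℚ)⁻¹ := by
    simp [Finset.sum_range_succ]
    push_cast
    have : (z : ℚ) ≠ 0 := by positivity
    field_simp
    ring
  linarith [h, h2.le, h2.ge]

theorem recip3 (z a b c : ℕ) (hz : 0 < z) (hab : a ≠ b) (hac : a ≠ c) (hbc : b ≠ c)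
    (hza : z ∣ a) (hzb : z ∣ b) (hzc : z ∣ c)
    (ha : 2 * z ≤ a) (hb : 2 * z ≤ b) (hc : 2 * z ≤ c) :
    (a : ℚ)⁻¹ + (b : ℚ)⁻¹ + (c : ℚ)⁻¹ ≤ 13 / 12 * (z : ℚ)⁻¹ := by
  have hcard : ({a, b, c} : Finset ℕ).card = 3 := by
    rw [Finset.card_insert_of_notMem (by simp [hab, hac]),
      Finset.card_insert_of_notMem (by simp [hbc]), Finset.card_singleton]
  have h := sum_recip_le z hz 3 2 {a, b, c} (by norm_num) hcard
    (by intro y hy; simp only [Finset.mem_insert, Finset.mem_singleton] at hy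
        rcases hy with rfl | rfl | rfl <;> exact ⟨by assumption, by assumption⟩)
  rw [Finset.sum_insert (by simp [hab, hac]), Finset.sum_insert (by simp [hbc]),
    Finset.sum_singleton] at h
  have h2 : ∑ i ∈ Finset.range 3, (((2 + i) * z : ℕ) : ℚ)⁻¹ = 13 / 12 * (z : ℚ)⁻¹ := by
    simp [Finset.sum_range_succ]
    push_cast
    have : (z : ℚ) ≠ 0 := by positivity
    field_simp
    ring
  linarith [h, h2.le]

theorem recip4 (z a b c d : ℕ) (hz : 0 < z)
    (hab : a ≠ b) (hac : a ≠ c) (had : a ≠ d) (hbc : b ≠ c) (hbd : b ≠ d) (hcd : c ≠ d)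
    (hza : z ∣ a) (hzb : z ∣ b) (hzc : z ∣ c) (hzd : z ∣ d)
    (ha : 2 * z ≤ a) (hb : 2 * z ≤ b) (hc : 2 * z ≤ c) (hd : 2 * z ≤ d) :
    (a : ℚ)⁻¹ + (b : ℚ)⁻¹ + (c : ℚ)⁻¹ + (d : ℚ)⁻¹ ≤ 77 / 60 * (z : ℚ)⁻¹ := by
  have hcard : ({a, b, c, d} : Finset ℕ).card = 4 := by
    rw [Finset.card_insert_of_notMem (by simp [hab, hac, had]),
      Finset.card_insert_of_notMem (by simp [hbc, hbd]),
      Finset.card_insert_of_notMem (by simp [hcd]), Finset.card_singleton]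
  have h := sum_recip_le z hz 4 2 {a, b, c, d} (by norm_num) hcard
    (by intro y hy; simp only [Finset.mem_insert, Finset.mem_singleton] at hy
        rcases hy with rfl | rfl | rfl | rfl <;> exact ⟨by assumption, by assumption⟩)
  rw [Finset.sum_insert (by simp [hab, hac, had]), Finset.sum_insert (by simp [hbc, hbd]),
    Finset.sum_insert (by simp [hcd]), Finset.sum_singleton] at h
  have h2 : ∑ i ∈ Finset.range 4, (((2 + i) * z : ℕ) : ℚ)⁻¹ = 77 / 60 * (z : ℚ)⁻¹ := by
    simp [Finset.sum_range_succ]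
    push_cast
    have : (z : ℚ) ≠ 0 := by positivity
    field_simp
    ring
  linarith [h, h2.le]

theorem key3 (x w v a b c : ℕ) (hx : 0 < x) (hw : 0 < w) (hv : 0 < v)
    (ha : 0 < a) (hb : 0 < b) (hc : 0 < c)
    (hwa : w ∣ a) (hwa' : w ≠ a)
    (hvb : v ∣ b) (hvb' : v ≠ b) (hvc : v ∣ c) (hvc' : v ≠ c) (hbc : b ≠ c) :
    (0:ℚ) < (x:ℚ)⁻¹ + (w:ℚ)⁻¹ + (v:ℚ)⁻¹ - (a:ℚ)⁻¹ - (b:ℚ)⁻¹ - (c:ℚ)⁻¹ := by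
  have h2a : 2 * w ≤ a := two_mul_le_s11 w a hwa hwa' ha
  have hbnd : (a : ℚ)⁻¹ ≤ ((2 * w : ℕ) : ℚ)⁻¹ := by
    apply inv_anti₀ (by positivity) (by exact_mod_cast h2a)
  have h2w : ((2 * w : ℕ) : ℚ)⁻¹ = (w : ℚ)⁻¹ / 2 := by
    push_cast
    rw [mul_inv]
    ring
  have hbc' : (b : ℚ)⁻¹ + (c : ℚ)⁻¹ ≤ 5 / 6 * (v : ℚ)⁻¹ :=
    recip2 v b c hv hbc hvb hvc (two_mul_le_s11 v b hvb hvb' hb) (two_mul_le_s11 v c hvc hvc' hc)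
  have hxp : (0:ℚ) < (x:ℚ)⁻¹ := by positivity
  have hwp : (0:ℚ) < (w:ℚ)⁻¹ := by positivity
  have hvp : (0:ℚ) < (v:ℚ)⁻¹ := by positivity
  rw [h2w] at hbnd
  linarith

theorem beta_ne (S : Finset ℕ) (hpos : ∀ a ∈ S, 0 < a)
    (hgcd : ∀ a ∈ S, ∀ b ∈ S, Nat.gcd a b ∈ S)
    (hcard : S.card ≤ 6) (x : ℕ) (hx : x ∈ S) : beta S x ≠ 0 := by
  classical
  have hx0 : 0 < x := hpos x hx
  set P := S.filter (fun y => y ∣ x ∧ y < x) with hPdef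
  have hbx : beta S x = (x:ℚ)⁻¹ - ∑ y ∈ P, beta S y := beta_spec S x
  have hPsub : P ⊆ S := Finset.filter_subset _ _
  have hPmem : ∀ y, y ∈ P ↔ y ∈ S ∧ y ∣ x ∧ y < x := fun y => Finset.mem_filter
  have hPcard : P.card ≤ 5 := by
    have hsub : P ⊆ S.erase x := by
      intro y hy
      rw [hPmem] at hy
      exact Finset.mem_erase.mpr ⟨Nat.ne_of_lt hy.2.2, hy.1⟩
    have := Finset.card_le_card hsub
    rw [Finset.card_erase_of_mem hx] at this
    omega
  set M := P.filter (fun y => ∀ z ∈ P, y ∣ z → y = z) with hMdef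
  have hMsub : M ⊆ P := Finset.filter_subset _ _
  have hMmax : ∀ m ∈ M, ∀ z ∈ P, m ∣ z → m = z := by
    intro m hm
    exact (Finset.mem_filter.mp hm).2
  have hMP : ∀ m ∈ M, m ∈ S ∧ m ∣ x ∧ m < x ∧ 0 < m := by
    intro m hm
    have := (hPmem m).mp (hMsub hm)
    exact ⟨this.1, this.2.1, this.2.2, hpos m this.1⟩
  have hcover : ∀ y ∈ P, ∃ m ∈ M, y ∣ m := by
    intro y hy
    set Q := P.filter (y ∣ ·) with hQdef
    have hyQ : y ∈ Q := Finset.mem_filter.mpr ⟨hy, dvd_rfl⟩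
    have hQne : Q.Nonempty := ⟨y, hyQ⟩
    set m := Q.max' hQne with hmdef
    have hmQ : m ∈ Q := Q.max'_mem hQne
    have hmP : m ∈ P := (Finset.mem_filter.mp hmQ).1
    have hym : y ∣ m := (Finset.mem_filter.mp hmQ).2
    refine ⟨m, ?_, hym⟩
    rw [hMdef, Finset.mem_filter]
    refine ⟨hmP, ?_⟩
    intro z hz hmz
    have hzQ : z ∈ Q := Finset.mem_filter.mpr ⟨hz, hym.trans hmz⟩
    have hzle : z ≤ m := Q.le_max' z hzQ
    have hz0 : 0 < z := hpos z ((hPmem z).mp hz).1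
    exact Nat.le_antisymm (Nat.le_of_dvd hz0 hmz) hzle
  set D : ℕ → Finset ℕ := fun m => S.filter (· ∣ m) with hDdef
  have hDP : ∀ m ∈ P, D m ⊆ P := by
    intro m hm y hy
    obtain ⟨hyS, hym⟩ := Finset.mem_filter.mp hy
    obtain ⟨hmS, hmx, hmlt⟩ := (hPmem m).mp hm
    refine (hPmem y).mpr ⟨hyS, hym.trans hmx, ?_⟩
    exact lt_of_le_of_lt (Nat.le_of_dvd (hpos m hmS) hym) hmlt
  have hDsum : ∀ m ∈ S, ∑ y ∈ D m, beta S y = (m:ℚ)⁻¹ := by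
    intro m hm
    exact sum_beta S m (hpos m hm) hm
  have hDinter : ∀ a b : ℕ, D a ∩ D b = D (Nat.gcd a b) := by
    intro a b
    ext y
    simp only [hDdef, Finset.mem_inter, Finset.mem_filter]
    constructor
    · rintro ⟨⟨h1, h2⟩, ⟨_, h3⟩⟩
      exact ⟨h1, Nat.dvd_gcd h2 h3⟩
    · rintro ⟨h1, h2⟩
      exact ⟨⟨h1, h2.trans (Nat.gcd_dvd_left a b)⟩, ⟨h1, h2.trans (Nat.gcd_dvd_right a b)⟩⟩
  have hU : ∀ s t : Finset ℕ, ∑ y ∈ s ∪ t, beta S y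
      = ∑ y ∈ s, beta S y + ∑ y ∈ t, beta S y - ∑ y ∈ s ∩ t, beta S y := by
    intro s t
    have := Finset.sum_union_inter (s₁ := s) (s₂ := t) (f := beta S)
    linarith
  have hgcdM : ∀ a ∈ M, ∀ b ∈ M, a ≠ b →
      Nat.gcd a b ∈ S ∧ Nat.gcd a b ∈ P ∧ Nat.gcd a b ∉ M ∧ Nat.gcd a b ≠ a ∧ Nat.gcd a b ≠ b
        ∧ 0 < Nat.gcd a b := by
    intro a ha b hb hab
    obtain ⟨haS, hax, halt, ha0⟩ := hMP a ha
    obtain ⟨hbS, hbx, hblt, hb0⟩ := hMP b hb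
    have hgS : Nat.gcd a b ∈ S := hgcd a haS b hbS
    have hg0 : 0 < Nat.gcd a b := Nat.gcd_pos_of_pos_left b ha0
    have hgP : Nat.gcd a b ∈ P := by
      refine (hPmem _).mpr ⟨hgS, (Nat.gcd_dvd_left a b).trans hax, ?_⟩
      exact lt_of_le_of_lt (Nat.le_of_dvd ha0 (Nat.gcd_dvd_left a b)) halt
    have hga : Nat.gcd a b ≠ a := by
      intro h
      have : a ∣ b := h ▸ Nat.gcd_dvd_right a b
      exact hab (hMmax a ha b (hMsub hb) this)
    have hgb : Nat.gcd a b ≠ b := by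
      intro h
      have : b ∣ a := h ▸ Nat.gcd_dvd_left a b
      exact hab (hMmax b hb a (hMsub ha) this).symm
    have hgM : Nat.gcd a b ∉ M := by
      intro h
      exact hga (hMmax _ h a (hMsub ha) (Nat.gcd_dvd_left a b))
    exact ⟨hgS, hgP, hgM, hga, hgb, hg0⟩
  have hbiU : P = M.biUnion D := by
    ext y
    constructor
    · intro hy
      obtain ⟨m, hm, hym⟩ := hcover y hy
      exact Finset.mem_biUnion.mpr ⟨m, hm, Finset.mem_filter.mpr ⟨((hPmem y).mp hy).1, hym⟩⟩
    · intro hy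
      obtain ⟨m, hm, hym⟩ := Finset.mem_biUnion.mp hy
      exact hDP m (hMsub hm) hym
  have hM5 : M.card ≤ 5 := le_trans (Finset.card_le_card hMsub) hPcard
  have hsplit : M.card = 0 ∨ M.card = 1 ∨ M.card = 2 ∨ M.card = 3 ∨ M.card = 4 ∨ M.card = 5 := by
    omega
  have hxq : ((x:ℚ))⁻¹ > 0 := by positivity
  rcases hsplit with h0 | h1 | h2 | h3 | h4 | h5
  · -- no proper divisors
    rw [Finset.card_eq_zero] at h0
    rw [hbx, hbiU, h0]
    simp
    positivity
  · -- one maximal divisor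
    obtain ⟨m, hMeq⟩ := Finset.card_eq_one.mp h1
    have hmM : m ∈ M := by rw [hMeq]; exact Finset.mem_singleton_self m
    obtain ⟨hmS, hmx, hmlt, hm0⟩ := hMP m hmM
    have hPeq : P = D m := by rw [hbiU, hMeq, Finset.singleton_biUnion]
    rw [hbx, hPeq, hDsum m hmS]
    have : (x:ℚ)⁻¹ < (m:ℚ)⁻¹ := by
      apply inv_strictAnti₀ (by positivity) (by exact_mod_cast hmlt)
    intro hcon
    rw [sub_eq_zero] at hcon
    rw [hcon] at this
    exact lt_irrefl _ this
  · -- two maximal divisors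
    obtain ⟨a, b, hab, hMeq⟩ := Finset.card_eq_two.mp h2
    have haM : a ∈ M := by rw [hMeq]; simp
    have hbM : b ∈ M := by rw [hMeq]; simp
    obtain ⟨haS, hax, halt, ha0⟩ := hMP a haM
    obtain ⟨hbS, hbx', hblt, hb0⟩ := hMP b hbM
    obtain ⟨hzS, hzP, hzM, hza, hzb, hz0⟩ := hgcdM a haM b hbM hab
    set z := Nat.gcd a b with hzdef
    have hPeq : P = D a ∪ D b := by
      rw [hbiU, hMeq]
      rw [Finset.biUnion_insert, Finset.singleton_biUnion]
    have hsum : ∑ y ∈ P, beta S y = (a:ℚ)⁻¹ + (b:ℚ)⁻¹ - (z:ℚ)⁻¹ := by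
      rw [hPeq, hU, hDinter, hDsum a haS, hDsum b hbS, hDsum z hzS]
    have hb1 : (a:ℚ)⁻¹ + (b:ℚ)⁻¹ ≤ 5/6 * (z:ℚ)⁻¹ :=
      recip2 z a b hz0 hab (Nat.gcd_dvd_left a b) (Nat.gcd_dvd_right a b)
        (two_mul_le_s11 z a (Nat.gcd_dvd_left a b) hza ha0)
        (two_mul_le_s11 z b (Nat.gcd_dvd_right a b) hzb hb0)
    have hzq : ((z:ℚ))⁻¹ > 0 := by positivity
    rw [hbx, hsum]
    intro hcon
    nlinarith [hcon, hb1, hxq, hzq]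
  · -- three maximal divisors
    have sub3 : ∀ a b c : ℕ, a ∈ M → b ∈ M → c ∈ M → a ≠ b → a ≠ c → b ≠ c →
        M = {a, b, c} → Nat.gcd a b = Nat.gcd a c → beta S x ≠ 0 := by
      intro a b c haM hbM hcM hab hac hbc hMeq heq
      obtain ⟨haS, hax, halt, ha0⟩ := hMP a haM
      obtain ⟨hbS, hbx', hblt, hb0⟩ := hMP b hbM
      obtain ⟨hcS, hcx', hclt, hc0⟩ := hMP c hcM
      obtain ⟨hwS, hwP, hwM, hwa, hwb, hw0⟩ := hgcdM a haM b hbM hab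
      obtain ⟨hvS, hvP, hvM, hvb, hvc, hv0⟩ := hgcdM b hbM c hcM hbc
      have hPeq : P = D a ∪ (D b ∪ D c) := by
        rw [hbiU, hMeq, Finset.biUnion_insert, Finset.biUnion_insert, Finset.singleton_biUnion]
      have hinter : D a ∩ (D b ∪ D c) = D (Nat.gcd a b) := by
        rw [Finset.inter_union_distrib_left, hDinter, hDinter, ← heq, Finset.union_self]
      have hsum : ∑ y ∈ P, beta S y
          = (a:ℚ)⁻¹ + ((b:ℚ)⁻¹ + (c:ℚ)⁻¹ - ((Nat.gcd b c : ℕ):ℚ)⁻¹) - ((Nat.gcd a b : ℕ):ℚ)⁻¹ := by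
        rw [hPeq, hU, hinter, hU, hDinter, hDsum a haS, hDsum b hbS, hDsum c hcS,
          hDsum _ hvS, hDsum _ hwS]
      have hkey := key3 x (Nat.gcd a b) (Nat.gcd b c) a b c hx0 hw0 hv0 ha0 hb0 hc0
        (Nat.gcd_dvd_left a b) hwa (Nat.gcd_dvd_left b c) hvb (Nat.gcd_dvd_right b c) hvc hbc
      rw [hbx, hsum]
      intro hcon
      nlinarith [hkey, hcon]
    obtain ⟨a, b, c, hab, hac, hbc, hMeq⟩ := Finset.card_eq_three.mp h3
    have haM : a ∈ M := by rw [hMeq]; simp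
    have hbM : b ∈ M := by rw [hMeq]; simp
    have hcM : c ∈ M := by rw [hMeq]; simp
    have htwo : Nat.gcd a b = Nat.gcd a c ∨ Nat.gcd a b = Nat.gcd b c
        ∨ Nat.gcd a c = Nat.gcd b c := by
      by_contra hcon
      push_neg at hcon
      obtain ⟨h12, h13, h23⟩ := hcon
      obtain ⟨_, hPab, hMab, _, _, _⟩ := hgcdM a haM b hbM hab
      obtain ⟨_, hPac, hMac, _, _, _⟩ := hgcdM a haM c hcM hac
      obtain ⟨_, hPbc, hMbc, _, _, _⟩ := hgcdM b hbM c hcM hbc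
      have hQ : insert (Nat.gcd a b) (insert (Nat.gcd a c) (insert (Nat.gcd b c) M)) ⊆ P := by
        intro y hy
        simp only [Finset.mem_insert] at hy
        rcases hy with rfl | rfl | rfl | hy
        exacts [hPab, hPac, hPbc, hMsub hy]
      have hQc : (insert (Nat.gcd a b) (insert (Nat.gcd a c) (insert (Nat.gcd b c) M))).card
          = 6 := by
        rw [Finset.card_insert_of_notMem (by simp [h12, h13, hMab]),
          Finset.card_insert_of_notMem (by simp [h23, hMac]),
          Finset.card_insert_of_notMem hMbc, h3]
      have := Finset.card_le_card hQ
      omega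
    rcases htwo with h | h | h
    · exact sub3 a b c haM hbM hcM hab hac hbc hMeq h
    · refine sub3 b a c hbM haM hcM (Ne.symm hab) hbc hac ?_ ?_
      · rw [hMeq]; ext y; simp only [Finset.mem_insert, Finset.mem_singleton]; tauto
      · rw [Nat.gcd_comm b a]; exact h
    · refine sub3 c a b hcM haM hbM (Ne.symm hac) (Ne.symm hbc) hab ?_ ?_
      · rw [hMeq]; ext y; simp only [Finset.mem_insert, Finset.mem_singleton]; tauto
      · rw [Nat.gcd_comm c a, Nat.gcd_comm c b]; exact h
  · -- four maximal divisors
    obtain ⟨a, Mr, haMr, hMeq', h3'⟩ := Finset.card_eq_succ.mp h4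
    obtain ⟨b, c, d, hbc, hbd, hcd, hMr⟩ := Finset.card_eq_three.mp h3'
    have hMeq : M = {a, b, c, d} := by rw [← hMeq', hMr]
    have hab : a ≠ b := by rintro rfl; exact haMr (by rw [hMr]; simp)
    have hac : a ≠ c := by rintro rfl; exact haMr (by rw [hMr]; simp)
    have had : a ≠ d := by rintro rfl; exact haMr (by rw [hMr]; simp)
    have haM : a ∈ M := by rw [hMeq]; simp
    have hbM : b ∈ M := by rw [hMeq]; simp
    have hcM : c ∈ M := by rw [hMeq]; simp
    have hdM : d ∈ M := by rw [hMeq]; simp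
    obtain ⟨haS, hax, halt, ha0⟩ := hMP a haM
    obtain ⟨hbS, hbx', hblt, hb0⟩ := hMP b hbM
    obtain ⟨hcS, hcx', hclt, hc0⟩ := hMP c hcM
    obtain ⟨hdS, hdx', hdlt, hd0⟩ := hMP d hdM
    have pair_eq : ∀ p ∈ M, ∀ q ∈ M, ∀ r ∈ M, ∀ s ∈ M, p ≠ q → r ≠ s →
        Nat.gcd p q = Nat.gcd r s := by
      intro p hp q hq r hr s hs hpq hrs
      by_contra hne
      obtain ⟨_, hP1, hM1, _, _, _⟩ := hgcdM p hp q hq hpq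
      obtain ⟨_, hP2, hM2, _, _, _⟩ := hgcdM r hr s hs hrs
      have hQ : insert (Nat.gcd p q) (insert (Nat.gcd r s) M) ⊆ P := by
        intro y hy
        simp only [Finset.mem_insert] at hy
        rcases hy with rfl | rfl | hy
        exacts [hP1, hP2, hMsub hy]
      have hQc : (insert (Nat.gcd p q) (insert (Nat.gcd r s) M)).card = 6 := by
        rw [Finset.card_insert_of_notMem (by simp [hne, hM1]),
          Finset.card_insert_of_notMem hM2, h4]
      have := Finset.card_le_card hQ
      omega
    obtain ⟨hzS, hzP, hzM, hza, hzb, hz0⟩ := hgcdM a haM b hbM hab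
    set z := Nat.gcd a b with hzdef
    have hzac : Nat.gcd a c = z := pair_eq a haM c hcM a haM b hbM hac hab
    have hzad : Nat.gcd a d = z := pair_eq a haM d hdM a haM b hbM had hab
    have hzbc : Nat.gcd b c = z := pair_eq b hbM c hcM a haM b hbM hbc hab
    have hzbd : Nat.gcd b d = z := pair_eq b hbM d hdM a haM b hbM hbd hab
    have hzcd : Nat.gcd c d = z := pair_eq c hcM d hdM a haM b hbM hcd hab
    have hzc : z ≠ c := by
      have := (hgcdM a haM c hcM hac).2.2.2.2.1
      rwa [hzac] at this
    have hzd : z ≠ d := by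
      have := (hgcdM a haM d hdM had).2.2.2.2.1
      rwa [hzad] at this
    have hdvc : z ∣ c := hzac ▸ Nat.gcd_dvd_right a c
    have hdvd : z ∣ d := hzad ▸ Nat.gcd_dvd_right a d
    have hPeq : P = D a ∪ (D b ∪ (D c ∪ D d)) := by
      rw [hbiU, hMeq, Finset.biUnion_insert, Finset.biUnion_insert, Finset.biUnion_insert,
        Finset.singleton_biUnion]
    have hint1 : D c ∩ D d = D z := by rw [hDinter, hzcd]
    have hint2 : D b ∩ (D c ∪ D d) = D z := by
      rw [Finset.inter_union_distrib_left, hDinter, hDinter, hzbc, hzbd, Finset.union_self]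
    have hint3 : D a ∩ (D b ∪ (D c ∪ D d)) = D z := by
      rw [Finset.inter_union_distrib_left, Finset.inter_union_distrib_left,
        hDinter, hDinter, hDinter, hzac, hzad, ← hzdef, Finset.union_self, Finset.union_self]
    have hsum : ∑ y ∈ P, beta S y
        = (a:ℚ)⁻¹ + (b:ℚ)⁻¹ + (c:ℚ)⁻¹ + (d:ℚ)⁻¹ - 3 * (z:ℚ)⁻¹ := by
      rw [hPeq, hU, hint3, hU, hint2, hU, hint1, hDsum a haS, hDsum b hbS, hDsum c hcS,
        hDsum d hdS, hDsum z hzS]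
      ring
    have hbnd : (a:ℚ)⁻¹ + (b:ℚ)⁻¹ + (c:ℚ)⁻¹ + (d:ℚ)⁻¹ ≤ 77/60 * (z:ℚ)⁻¹ :=
      recip4 z a b c d hz0 hab hac had hbc hbd hcd (Nat.gcd_dvd_left a b)
        (Nat.gcd_dvd_right a b) hdvc hdvd
        (two_mul_le_s11 z a (Nat.gcd_dvd_left a b) hza ha0)
        (two_mul_le_s11 z b (Nat.gcd_dvd_right a b) hzb hb0)
        (two_mul_le_s11 z c hdvc hzc hc0)
        (two_mul_le_s11 z d hdvd hzd hd0)
    have hzq : ((z:ℚ))⁻¹ > 0 := by positivity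
    rw [hbx, hsum]
    intro hcon
    nlinarith [hcon, hbnd, hxq, hzq]
  · -- five maximal divisors: impossible
    exfalso
    have hMeqP : M = P := Finset.eq_of_subset_of_card_le hMsub (by omega)
    obtain ⟨a, haM, b, hbM, hab⟩ := Finset.one_lt_card.mp (by omega : 1 < M.card)
    obtain ⟨_, hzP, hzM, _, _, _⟩ := hgcdM a haM b hbM hab
    rw [← hMeqP] at hzP
    exact hzM hzP

/-- If `S` is a gcd-closed set of distinct positive integers with exactly 6
elements, then the LCM matrix `[S]` is invertible. -/
theorem lcmMatrix_gcdClosed_card_eq_six_isUnit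
    (S : Finset ℕ) (hpos : ∀ a ∈ S, 0 < a)
    (hgcd : ∀ a ∈ S, ∀ b ∈ S, Nat.gcd a b ∈ S)
    (hcard : S.card = 6) :
    IsUnit (Matrix.of fun i j : ↥S => (Nat.lcm (i : ℕ) (j : ℕ) : ℚ)) := by
  classical
  set E : Matrix ↥S ↥S ℚ := Matrix.of fun i j : ↥S => if (j : ℕ) ∣ (i : ℕ) then 1 else 0 with hE
  set B : Matrix ↥S ↥S ℚ := Matrix.diagonal fun i : ↥S => beta S i with hB
  set V : Matrix ↥S ↥S ℚ := Matrix.diagonal fun i : ↥S => (i : ℚ) with hV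
  have hpos' : ∀ i : ↥S, 0 < (i : ℕ) := fun i => hpos i i.2
  have hL : (Matrix.of fun i j : ↥S => (Nat.lcm (i : ℕ) (j : ℕ) : ℚ)) = V * (E * B * Eᵀ) * V := by
    ext i j
    have h1 : (V * (E * B * Eᵀ) * V) i j = (i : ℚ) * (E * B * Eᵀ) i j * (j : ℚ) := by
      rw [Matrix.mul_diagonal, Matrix.diagonal_mul]
    have h2 : (E * B * Eᵀ) i j
        = ∑ k : ↥S, (if (k : ℕ) ∣ (i : ℕ) then 1 else 0) * beta S k
            * (if (k : ℕ) ∣ (j : ℕ) then 1 else 0) := by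
      rw [Matrix.mul_apply]
      apply Finset.sum_congr rfl
      intro k _
      rw [Matrix.mul_diagonal, Matrix.transpose_apply]
      rfl
    have h3 : (E * B * Eᵀ) i j = ((Nat.gcd (i : ℕ) (j : ℕ) : ℕ) : ℚ)⁻¹ := by
      rw [h2]
      have hterm : ∀ k : ↥S,
          (if (k : ℕ) ∣ (i : ℕ) then (1:ℚ) else 0) * beta S k
            * (if (k : ℕ) ∣ (j : ℕ) then 1 else 0)
          = if (k : ℕ) ∣ Nat.gcd (i : ℕ) (j : ℕ) then beta S k else 0 := by
        intro k
        by_cases hki : (k : ℕ) ∣ (i : ℕ) <;> by_cases hkj : (k : ℕ) ∣ (j : ℕ)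
        · rw [if_pos hki, if_pos hkj, if_pos (Nat.dvd_gcd hki hkj)]; ring
        · rw [if_pos hki, if_neg hkj,
            if_neg (fun h => hkj ((Nat.dvd_gcd_iff.mp h).2))]; ring
        · rw [if_neg hki, if_pos hkj,
            if_neg (fun h => hki ((Nat.dvd_gcd_iff.mp h).1))]; ring
        · rw [if_neg hki, if_neg hkj,
            if_neg (fun h => hki ((Nat.dvd_gcd_iff.mp h).1))]; ring
      rw [Finset.sum_congr rfl fun k _ => hterm k]
      rw [Finset.univ_eq_attach]
      rw [Finset.sum_attach S (fun y => if y ∣ Nat.gcd (i : ℕ) (j : ℕ) then beta S y else 0)]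
      rw [← Finset.sum_filter]
      exact sum_beta S _ (Nat.gcd_pos_of_pos_left _ (hpos' i)) (hgcd _ i.2 _ j.2)
    rw [h1, h3]
    have hg := Nat.gcd_mul_lcm (i : ℕ) (j : ℕ)
    have hgq : ((Nat.gcd (i:ℕ) (j:ℕ) : ℕ) : ℚ) * ((Nat.lcm (i:ℕ) (j:ℕ) : ℕ) : ℚ)
        = ((i:ℕ) : ℚ) * ((j:ℕ) : ℚ) := by exact_mod_cast congrArg (Nat.cast : ℕ → ℚ) hg
    have hgpos : (0:ℚ) < ((Nat.gcd (i:ℕ) (j:ℕ) : ℕ) : ℚ) := by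
      exact_mod_cast Nat.gcd_pos_of_pos_left _ (hpos' i)
    show ((Nat.lcm (i:ℕ) (j:ℕ) : ℕ) : ℚ) = _
    field_simp
    linarith [hgq]
  rw [hL]
  have hVu : IsUnit V := by
    rw [Matrix.isUnit_iff_isUnit_det, hV, Matrix.det_diagonal, isUnit_iff_ne_zero]
    exact Finset.prod_ne_zero_iff.mpr fun i _ => by
      have := hpos' i; positivity
  have hBu : IsUnit B := by
    rw [Matrix.isUnit_iff_isUnit_det, hB, Matrix.det_diagonal, isUnit_iff_ne_zero]
    exact Finset.prod_ne_zero_iff.mpr fun i _ =>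
      beta_ne S hpos hgcd (le_of_eq hcard) i i.2
  have hEu : IsUnit E := by
    rw [Matrix.isUnit_iff_isUnit_det, isUnit_iff_ne_zero]
    have htri : E.BlockTriangular OrderDual.toDual := by
      intro i j hij
      have hij' : (i : ℕ) < (j : ℕ) := hij
      have : ¬ (j : ℕ) ∣ (i : ℕ) := fun h =>
        absurd (Nat.le_of_dvd (hpos' i) h) (not_le.mpr hij')
      simp [hE, this]
    rw [Matrix.det_of_lowerTriangular E htri]
    have : ∀ i : ↥S, E i i = 1 := fun i => by simp [hE]
    rw [Finset.prod_congr rfl fun i _ => this i]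
    simp
  have hEtu : IsUnit Eᵀ := by
    rw [Matrix.isUnit_iff_isUnit_det, Matrix.det_transpose]
    exact Matrix.isUnit_iff_isUnit_det E |>.mp hEu
  exact (hVu.mul ((hEu.mul hBu).mul hEtu)).mul hVu
end

section
/- (Corollary 4.5, second part) If S is a gcd-closed set of distinct positive integers with exactly 7 elements, then the LCM matrix [S] is invertible. -/
open Finset


example (m n : ℕ) (h : m ∣ n) : Nat.gcd n m = m := Nat.gcd_eq_right h
example (s : Finset ℕ) (a : ℕ) (h : a ∉ s) (f : Finset ℕ → ℚ) :
    ∑ t ∈ (insert a s).powerset, f t = ∑ t ∈ s.powerset, f t + ∑ t ∈ s.powerset, f (insert a t) :=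
  Finset.sum_powerset_insert h f

private lemma inv_le_half {d y : ℕ} (hd : 0 < d) (hdvd : d ∣ y) (hne : d ≠ y) (hy : 0 < y) :
    (y:ℚ)⁻¹ ≤ (d:ℚ)⁻¹ / 2 := by
  obtain ⟨k, rfl⟩ := hdvd
  have hk : 2 ≤ k := by
    have h0 : k ≠ 0 := by rintro rfl; simp at hy
    have h1 : k ≠ 1 := by rintro rfl; simp at hne
    omega
  have h2 : (2 * d : ℕ) ≤ d * k := by nlinarith
  have h2' : ((2*d : ℕ):ℚ) ≤ ((d*k : ℕ):ℚ) := Nat.cast_le.2 h2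
  have hdq : (0:ℚ) < (d:ℚ) := by exact_mod_cast hd
  have : ((d*k:ℕ):ℚ)⁻¹ ≤ ((2*d:ℕ):ℚ)⁻¹ := by
    apply inv_anti₀ _ h2'
    push_cast; linarith
  calc ((d*k:ℕ):ℚ)⁻¹ ≤ ((2*d:ℕ):ℚ)⁻¹ := this
    _ = (d:ℚ)⁻¹ / 2 := by push_cast; rw [mul_inv]; ring

private lemma gcdClosed_gcd_mem {S : Finset ℕ} (hgcd : ∀ a ∈ S, ∀ b ∈ S, Nat.gcd a b ∈ S)
    (T : Finset ℕ) (hT : T ⊆ S) (hne : T.Nonempty) : T.gcd id ∈ S := by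
  classical
  induction T using Finset.induction_on with
  | empty => exact absurd hne (by simp)
  | @insert a s ha ih =>
    rw [Finset.gcd_insert]
    rcases s.eq_empty_or_nonempty with rfl | hs
    · simpa using hT (by simp)
    · have hsS : s ⊆ S := fun z hz => hT (mem_insert_of_mem hz)
      have := ih hsS hs
      exact hgcd a (hT (mem_insert_self a s)) _ this

private lemma sum_powerset_neg_one_q {s : Finset ℕ} :
    (∑ T ∈ s.powerset, (-1:ℚ)^T.card) = if s = ∅ then 1 else 0 := by
  have := @Finset.sum_powerset_neg_one_pow_card ℕ _ s
  have h2 : ((∑ T ∈ s.powerset, (-1:ℤ)^T.card : ℤ) : ℚ) = ∑ T ∈ s.powerset, (-1:ℚ)^T.card := by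
    push_cast; rfl
  rw [← h2, this]
  split <;> simp

private lemma sum_powerset_split (s : Finset ℕ) (f : Finset ℕ → ℚ) :
    ∑ T ∈ s.powerset, f T
      = f ∅ + (∑ y ∈ s, f {y}) + ∑ T ∈ s.powerset.filter (fun T => 2 ≤ T.card), f T := by
  classical
  rw [← Finset.sum_filter_add_sum_filter_not s.powerset (fun T => T.card ≤ 1) f]
  have hpred : s.powerset.filter (fun T => ¬ T.card ≤ 1) = s.powerset.filter (fun T => 2 ≤ T.card) := by
    apply Finset.filter_congr; intro T _; simp; omega
  rw [hpred]
  congr 1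
  have h01 : s.powerset.filter (fun T => T.card ≤ 1) = insert ∅ (s.image fun y => ({y} : Finset ℕ)) := by
    ext T
    simp only [mem_filter, mem_powerset, mem_insert, mem_image]
    constructor
    · rintro ⟨hsub, hc⟩
      interval_cases h : T.card
      · exact Or.inl (Finset.card_eq_zero.1 h)
      · obtain ⟨a, rfl⟩ := Finset.card_eq_one.1 h
        exact Or.inr ⟨a, hsub (by simp), rfl⟩
    · rintro (rfl | ⟨a, ha, rfl⟩)
      · simp
      · simp [Finset.singleton_subset_iff, ha]
  rw [h01, Finset.sum_insert (by simp), Finset.sum_image]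
  intro a _ b _ h
  simpa using h

private lemma sum_P2_neg_one {s : Finset ℕ} (hs : s.Nonempty) :
    ∑ T ∈ s.powerset.filter (fun T => 2 ≤ T.card), (-1:ℚ)^T.card = (s.card : ℚ) - 1 := by
  have h0 : (∑ T ∈ s.powerset, (-1:ℚ)^T.card) = 0 := by
    rw [sum_powerset_neg_one_q, if_neg (Finset.nonempty_iff_ne_empty.1 hs)]
  rw [sum_powerset_split s (fun T => (-1:ℚ)^T.card)] at h0
  simp only [Finset.card_empty, pow_zero, Finset.card_singleton, pow_one, Finset.sum_const,
    nsmul_eq_mul, mul_neg, mul_one] at h0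
  linarith
private lemma caseC (x a b c : ℕ) (β : ℚ)
    (hx : 0 < x) (ha : 0 < a) (hb : 0 < b) (hc : 0 < c)
    (hqa : Nat.gcd a c ≠ a) (hsb : Nat.gcd b c ≠ b) (hsc : Nat.gcd b c ≠ c)
    (hβ : β = (x:ℚ)⁻¹ - (a:ℚ)⁻¹ - (b:ℚ)⁻¹ - (c:ℚ)⁻¹
        + ((Nat.gcd a c : ℕ):ℚ)⁻¹ + ((Nat.gcd b c : ℕ):ℚ)⁻¹) :
    β ≠ 0 := by
  have hq : 0 < Nat.gcd a c := Nat.gcd_pos_of_pos_left _ ha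
  have hs : 0 < Nat.gcd b c := Nat.gcd_pos_of_pos_left _ hb
  have h1 : (a:ℚ)⁻¹ ≤ ((Nat.gcd a c:ℕ):ℚ)⁻¹ / 2 := inv_le_half hq (Nat.gcd_dvd_left a c) hqa ha
  have h2 : (b:ℚ)⁻¹ ≤ ((Nat.gcd b c:ℕ):ℚ)⁻¹ / 2 := inv_le_half hs (Nat.gcd_dvd_left b c) hsb hb
  have h3 : (c:ℚ)⁻¹ ≤ ((Nat.gcd b c:ℕ):ℚ)⁻¹ / 2 := inv_le_half hs (Nat.gcd_dvd_right b c) hsc hc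
  have hx0 : (0:ℚ) < (x:ℚ)⁻¹ := by
    have : (0:ℚ) < (x:ℚ) := by exact_mod_cast hx
    positivity
  have hq0 : (0:ℚ) < ((Nat.gcd a c:ℕ):ℚ)⁻¹ := by
    have : (0:ℚ) < ((Nat.gcd a c:ℕ):ℚ) := by exact_mod_cast hq
    positivity
  have hs0 : (0:ℚ) < ((Nat.gcd b c:ℕ):ℚ)⁻¹ := by
    have : (0:ℚ) < ((Nat.gcd b c:ℕ):ℚ) := by exact_mod_cast hs
    positivity
  have : 0 < β := by rw [hβ]; linarith
  exact ne_of_gt this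

private lemma key_aux (S : Finset ℕ) (hpos : ∀ a ∈ S, 0 < a)
    (hgcd : ∀ a ∈ S, ∀ b ∈ S, Nat.gcd a b ∈ S) (hcard : S.card = 7)
    (α : ↥S → ℚ)
    (hsum : ∀ m ∈ S, ∀ hm : m ∈ S, (∑ k : ↥S, if (k:ℕ) ∣ m then α k else 0) = (m:ℚ)⁻¹)
    (x : ℕ) (hx : x ∈ S) : α ⟨x, hx⟩ ≠ 0 := by
  classical
  set A := S.filter (fun y => y ∣ x) with hA
  set Mx := A.filter (fun y => y ≠ x ∧ ∀ z ∈ A, z ≠ x → y ∣ z → z = y) with hMx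
  set G : Finset ℕ → ℕ := fun T => (insert x T).gcd id with hG
  have hxpos : 0 < x := hpos x hx
  have hMxmem : ∀ y ∈ Mx, y ∈ S ∧ y ∣ x ∧ y ≠ x ∧ 0 < y := by
    intro y hy
    rw [hMx, mem_filter, hA, mem_filter] at hy
    exact ⟨hy.1.1, hy.1.2, hy.2.1, hpos y hy.1.1⟩
  have hanti : ∀ y ∈ Mx, ∀ z ∈ Mx, y ∣ z → z = y := by
    intro y hy z hz hdvd
    rw [hMx, mem_filter] at hy hz
    exact hy.2.2 z hz.1 hz.2.1 hdvd
  have hGS : ∀ T ∈ Mx.powerset, G T ∈ S := by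
    intro T hT
    apply gcdClosed_gcd_mem hgcd
    · intro z hz
      rcases Finset.mem_insert.1 hz with rfl | hz
      · exact hx
      · exact (hMxmem z ((Finset.mem_powerset.1 hT) hz)).1
    · exact ⟨x, Finset.mem_insert_self x T⟩
  have hGdvdx : ∀ T, G T ∣ x := fun T => Finset.gcd_dvd (Finset.mem_insert_self x T)
  have hGdvd : ∀ T, ∀ y ∈ T, G T ∣ y := fun T y hy =>
    Finset.gcd_dvd (Finset.mem_insert_of_mem hy)
  have hdvdG : ∀ (k : ℕ) (T : Finset ℕ), k ∣ G T ↔ (k ∣ x ∧ ∀ y ∈ T, k ∣ y) := by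
    intro k T
    rw [hG]
    constructor
    · intro h
      have := Finset.dvd_gcd_iff.1 h
      exact ⟨this x (mem_insert_self x T), fun y hy => this y (mem_insert_of_mem hy)⟩
    · rintro ⟨h1, h2⟩
      apply Finset.dvd_gcd
      intro b hb
      rcases Finset.mem_insert.1 hb with rfl | hb
      · exact h1
      · exact h2 b hb
  -- every proper divisor of x in S divides a maximal one
  have hmaxmul : ∀ k ∈ S, k ∣ x → k ≠ x → ∃ y ∈ Mx, k ∣ y := by
    intro k hk hkx hkne
    set B := A.filter (fun z => z ≠ x ∧ k ∣ z) with hB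
    have hkB : k ∈ B := by
      rw [hB, mem_filter, hA, mem_filter]
      exact ⟨⟨hk, hkx⟩, hkne, dvd_refl k⟩
    have hBne : B.Nonempty := ⟨k, hkB⟩
    set y := B.max' hBne with hy
    have hyB : y ∈ B := B.max'_mem hBne
    rw [hB, mem_filter] at hyB
    refine ⟨y, ?_, hyB.2.2⟩
    rw [hMx, mem_filter]
    refine ⟨hyB.1, hyB.2.1, ?_⟩
    intro z hz hzx hyz
    have hzB : z ∈ B := by
      rw [hB, mem_filter]
      exact ⟨hz, hzx, dvd_trans hyB.2.2 hyz⟩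
    have h1 : z ≤ y := B.le_max' z hzB
    have h2 : y ≤ z := by
      apply Nat.le_of_dvd _ hyz
      exact hpos z (Finset.mem_filter.1 hz).1
    omega
  have hbeta : α ⟨x, hx⟩ = ∑ T ∈ Mx.powerset, (-1:ℚ)^T.card * ((G T : ℕ):ℚ)⁻¹ := by
    have h1 : ∀ T ∈ Mx.powerset, (((G T : ℕ):ℚ))⁻¹ = ∑ k : ↥S, if (k:ℕ) ∣ G T then α k else 0 :=
      fun T hT => (hsum _ (hGS T hT) (hGS T hT)).symm
    calc α ⟨x, hx⟩
        = ∑ k : ↥S, (if (k:ℕ) ∣ x ∧ Mx.filter (fun y => (k:ℕ) ∣ y) = ∅ then α k else 0) := by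
          rw [Finset.sum_eq_single (⟨x, hx⟩ : ↥S)]
          · rw [if_pos]
            refine ⟨dvd_refl x, ?_⟩
            rw [Finset.filter_eq_empty_iff]
            intro y hy hxy
            exact absurd (Nat.dvd_antisymm (hMxmem y hy).2.1 hxy) (hMxmem y hy).2.2.1
          · intro k _ hkne
            rw [if_neg]
            rintro ⟨hkx, hkemp⟩
            have hkxne : (k:ℕ) ≠ x := fun h => hkne (Subtype.ext h)
            obtain ⟨y, hy, hky⟩ := hmaxmul k k.2 hkx hkxne
            rw [Finset.filter_eq_empty_iff] at hkemp
            exact hkemp hy hky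
          · intro h; exact absurd (Finset.mem_univ _) h
      _ = ∑ k : ↥S, ∑ T ∈ Mx.powerset, (-1:ℚ)^T.card * (if (k:ℕ) ∣ G T then α k else 0) := by
          apply Finset.sum_congr rfl
          intro k _
          by_cases hkx : (k:ℕ) ∣ x
          · set N := Mx.filter (fun y => (k:ℕ) ∣ y) with hN
            have hiff : ∀ T ∈ Mx.powerset, ((k:ℕ) ∣ G T ↔ T ⊆ N) := by
              intro T hT
              rw [hdvdG]
              constructor
              · rintro ⟨-, h2⟩ y hy
                rw [hN, mem_filter]
                exact ⟨Finset.mem_powerset.1 hT hy, h2 y hy⟩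
              · intro hTN
                exact ⟨hkx, fun y hy => (Finset.mem_filter.1 (hTN hy)).2⟩
            have hsub : N.powerset ⊆ Mx.powerset :=
              Finset.powerset_mono.2 (Finset.filter_subset _ _)
            have step1 : ∑ T ∈ N.powerset, (-1:ℚ)^T.card * (if (k:ℕ) ∣ G T then α k else 0)
                = ∑ T ∈ Mx.powerset, (-1:ℚ)^T.card * (if (k:ℕ) ∣ G T then α k else 0) := by
              apply Finset.sum_subset hsub
              intro T hT hTN
              rw [if_neg, mul_zero]
              intro hdvd
              exact hTN (Finset.mem_powerset.2 ((hiff T hT).1 hdvd))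
            have step2 : ∑ T ∈ N.powerset, (-1:ℚ)^T.card * (if (k:ℕ) ∣ G T then α k else 0)
                = ∑ T ∈ N.powerset, (-1:ℚ)^T.card * α k := by
              apply Finset.sum_congr rfl
              intro T hT
              rw [if_pos ((hiff T (hsub hT)).2 (Finset.mem_powerset.1 hT))]
            rw [← step1, step2, ← Finset.sum_mul, sum_powerset_neg_one_q]
            by_cases hNe : N = ∅
            · rw [if_pos hNe, if_pos ⟨hkx, hNe⟩, one_mul]
            · rw [if_neg hNe, if_neg (fun h => hNe h.2), zero_mul]
          · rw [if_neg (fun h => hkx h.1)]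
            symm
            apply Finset.sum_eq_zero
            intro T hT
            rw [if_neg (fun h => hkx (dvd_trans h (hGdvdx T))), mul_zero]
      _ = ∑ T ∈ Mx.powerset, (-1:ℚ)^T.card * ((G T : ℕ):ℚ)⁻¹ := by
          rw [Finset.sum_comm]
          refine Finset.sum_congr rfl (fun T hT => ?_)
          rw [← Finset.mul_sum, ← h1 T hT]
  -- PART III
  rw [hbeta]
  have hGempty : G ∅ = x := by
    rw [hG]
    simp
  have hGsingle : ∀ y ∈ Mx, G {y} = y := by
    intro y hy
    show (insert x ({y} : Finset ℕ)).gcd id = y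
    rw [Finset.gcd_insert]
    have h1 : ({y} : Finset ℕ).gcd id = y := by simp
    rw [h1]
    show Nat.gcd x y = y
    exact Nat.gcd_eq_right (hMxmem y hy).2.1
  have hxne : ((x:ℕ):ℚ)⁻¹ ≠ 0 := by
    apply inv_ne_zero
    exact_mod_cast hxpos.ne'
  have hxinvpos : (0:ℚ) < ((x:ℕ):ℚ)⁻¹ := by
    have : (0:ℚ) < (x:ℚ) := by exact_mod_cast hxpos
    positivity
  by_cases hr0 : Mx.card = 0
  · rw [Finset.card_eq_zero.1 hr0]
    rw [Finset.powerset_empty, Finset.sum_singleton, hGempty]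
    simpa using hxne
  by_cases hr1 : Mx.card = 1
  · obtain ⟨y, hMe⟩ := Finset.card_eq_one.1 hr1
    have hyMx : y ∈ Mx := by rw [hMe]; exact Finset.mem_singleton_self y
    have hy := hMxmem y hyMx
    rw [hMe, show ({y} : Finset ℕ) = insert y ∅ from rfl,
      Finset.sum_powerset_insert (by simp) _, Finset.powerset_empty, Finset.sum_singleton,
      Finset.sum_singleton]
    rw [show insert y ∅ = ({y} : Finset ℕ) from rfl, hGempty, hGsingle y hyMx]
    simp only [Finset.card_empty, pow_zero, one_mul, Finset.card_singleton, pow_one]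
    have hhalf : ((x:ℕ):ℚ)⁻¹ ≤ ((y:ℕ):ℚ)⁻¹ / 2 := inv_le_half hy.2.2.2 hy.2.1 hy.2.2.1 hxpos
    have hypos : (0:ℚ) < ((y:ℕ):ℚ)⁻¹ := by
      have : (0:ℚ) < (y:ℚ) := by exact_mod_cast hy.2.2.2
      positivity
    intro hcon
    nlinarith [hcon]
  -- now r ≥ 2
  have hr2 : 2 ≤ Mx.card := by omega
  set P2 := Mx.powerset.filter (fun T => 2 ≤ T.card) with hP2
  have hMxP2 : Mx ∈ P2 := by
    rw [hP2, Finset.mem_filter, Finset.mem_powerset]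
    exact ⟨subset_rfl, hr2⟩
  set V := P2.image G with hV
  have hVval : ∀ v ∈ V, v ∈ S ∧ v ∣ x ∧ 0 < v ∧ v ≠ x ∧ (∀ y ∈ Mx, v ≠ y) := by
    intro v hv
    obtain ⟨T, hT, rfl⟩ := Finset.mem_image.1 hv
    have hTpow : T ∈ Mx.powerset := (Finset.mem_filter.1 hT).1
    have hTcard : 2 ≤ T.card := (Finset.mem_filter.1 hT).2
    obtain ⟨z0, hz0T⟩ : T.Nonempty := Finset.card_pos.1 (by omega)
    have hz0Mx : z0 ∈ Mx := Finset.mem_powerset.1 hTpow hz0T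
    refine ⟨hGS T hTpow, hGdvdx T, hpos _ (hGS T hTpow), ?_, ?_⟩
    · intro heq
      have h1 : G T ∣ z0 := hGdvd T z0 hz0T
      rw [heq] at h1
      exact (hMxmem z0 hz0Mx).2.2.1 (Nat.dvd_antisymm (hMxmem z0 hz0Mx).2.1 h1)
    · intro y hy heq
      obtain ⟨z, hzT, hzy⟩ := Finset.exists_mem_ne (s := T) (by omega) y
      have hzMx : z ∈ Mx := Finset.mem_powerset.1 hTpow hzT
      have h1 : G T ∣ z := hGdvd T z hzT
      rw [heq] at h1
      exact hzy (hanti y hy z hzMx h1)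
  have hxMx : x ∉ Mx := fun h => (hMxmem x h).2.2.1 rfl
  have hcb : 1 + (Mx.card + V.card) ≤ 7 := by
    have hdisj : Disjoint Mx V := by
      rw [Finset.disjoint_left]
      intro y hy hyV
      exact (hVval y hyV).2.2.2.2 y hy rfl
    have hxnotin : x ∉ Mx ∪ V := by
      rw [Finset.mem_union]
      rintro (h | h)
      · exact hxMx h
      · exact (hVval x h).2.2.2.1 rfl
    have hsub : insert x (Mx ∪ V) ⊆ S := by
      intro z hz
      rcases Finset.mem_insert.1 hz with rfl | hz
      · exact hx
      rcases Finset.mem_union.1 hz with h | h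
      · exact (hMxmem z h).1
      · exact (hVval z h).1
    calc 1 + (Mx.card + V.card) = (insert x (Mx ∪ V)).card := by
          rw [Finset.card_insert_of_notMem hxnotin, Finset.card_union_of_disjoint hdisj]
          omega
      _ ≤ S.card := Finset.card_le_card hsub
      _ = 7 := hcard
  set v0 := G Mx with hv0
  have hv0V : v0 ∈ V := Finset.mem_image_of_mem G hMxP2
  have hv0facts := hVval v0 hv0V
  have hv0dvdGT : ∀ T ∈ P2, v0 ∣ G T := by
    intro T hT
    show (insert x Mx).gcd id ∣ (insert x T).gcd id
    apply Finset.dvd_gcd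
    intro b hb
    apply Finset.gcd_dvd
    rcases Finset.mem_insert.1 hb with rfl | hb
    · exact Finset.mem_insert_self b Mx
    · exact Finset.mem_insert_of_mem
        (Finset.mem_powerset.1 (Finset.mem_filter.1 hT).1 hb)
  have hv0y : ∀ y ∈ Mx, v0 ∣ y := by
    intro y hy
    exact Finset.gcd_dvd (Finset.mem_insert_of_mem hy)
  have hVne : V.Nonempty := ⟨v0, hv0V⟩
  have hr2V : Mx.card = 2 → V.card = 1 := by
    intro h2
    have hVsing : V = {v0} := by
      apply Finset.eq_singleton_iff_unique_mem.2
      refine ⟨hv0V, ?_⟩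
      intro v hv
      obtain ⟨T, hT, rfl⟩ := Finset.mem_image.1 hv
      have hTMx : T = Mx := Finset.eq_of_subset_of_card_le
        (Finset.mem_powerset.1 (Finset.mem_filter.1 hT).1)
        (by have := (Finset.mem_filter.1 hT).2; omega)
      rw [hTMx]
    rw [hVsing, Finset.card_singleton]
  have hVcard1 : 1 ≤ V.card := Finset.card_pos.2 hVne
  have hVcases : V.card = 1 ∨ V.card = 2 ∨ (V.card = 3 ∧ Mx.card = 3) := by
    by_cases h1 : V.card = 1
    · exact Or.inl h1
    by_cases h2 : V.card = 2
    · exact Or.inr (Or.inl h2)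
    have h2' : Mx.card ≠ 2 := fun h => by have := hr2V h; omega
    exact Or.inr (Or.inr ⟨by omega, by omega⟩)
  -- common split of the powerset sum
  rw [sum_powerset_split Mx (fun T => (-1:ℚ)^T.card * ((G T : ℕ):ℚ)⁻¹), ← hP2]
  have hsingles : ∑ y ∈ Mx, (-1:ℚ)^(({y} : Finset ℕ).card) * ((G {y} : ℕ):ℚ)⁻¹
      = - ∑ y ∈ Mx, ((y:ℕ):ℚ)⁻¹ := by
    rw [← Finset.sum_neg_distrib]
    refine Finset.sum_congr rfl (fun y hy => ?_)
    rw [hGsingle y hy]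
    simp
  -- (sum already beta-reduced)
  rw [hsingles, hGempty]
  simp only [Finset.card_empty, pow_zero, one_mul]
  have hMxne : Mx.Nonempty := Finset.card_pos.1 (by omega)
  have hv0pos : (0:ℚ) < ((v0:ℕ):ℚ)⁻¹ := by
    have : (0:ℚ) < (v0:ℚ) := by exact_mod_cast hv0facts.2.2.1
    positivity
  have hrq : (2:ℚ) ≤ (Mx.card:ℚ) := by exact_mod_cast hr2
  rcases hVcases with hVc | hVc | ⟨hVc, hMc3⟩
  · -- Case A : all gcds equal v0
    have hVsing : V = {v0} :=
      (Finset.eq_of_subset_of_card_le (Finset.singleton_subset_iff.2 hv0V) (by rw [Finset.card_singleton]; omega)).symm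
    have hGTv : ∀ T ∈ P2, G T = v0 := by
      intro T hT
      have h1 : G T ∈ V := Finset.mem_image_of_mem G hT
      rw [hVsing, Finset.mem_singleton] at h1
      exact h1
    have hQ : ∑ T ∈ P2, (-1:ℚ)^T.card * ((G T : ℕ):ℚ)⁻¹
        = ((Mx.card:ℚ) - 1) * ((v0:ℕ):ℚ)⁻¹ := by
      have hterm : ∀ T ∈ P2, (-1:ℚ)^T.card * ((G T : ℕ):ℚ)⁻¹
          = (-1:ℚ)^T.card * ((v0:ℕ):ℚ)⁻¹ := fun T hT => by rw [hGTv T hT]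
      rw [Finset.sum_congr rfl hterm, ← Finset.sum_mul, hP2, sum_P2_neg_one hMxne]
    rw [hQ]
    have hYb : ∑ y ∈ Mx, ((y:ℕ):ℚ)⁻¹ ≤ (Mx.card : ℚ) * (((v0:ℕ):ℚ)⁻¹ / 2) := by
      calc ∑ y ∈ Mx, ((y:ℕ):ℚ)⁻¹ ≤ ∑ _y ∈ Mx, ((v0:ℕ):ℚ)⁻¹/2 := by
            apply Finset.sum_le_sum
            intro y hy
            exact inv_le_half hv0facts.2.2.1 (hv0y y hy) (hv0facts.2.2.2.2 y hy)
              (hMxmem y hy).2.2.2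
        _ = _ := by rw [Finset.sum_const, nsmul_eq_mul]
    intro hcon
    nlinarith [hYb, hrq, hxinvpos, hv0pos,
      mul_nonneg (by linarith : (0:ℚ) ≤ (Mx.card:ℚ) - 2) (le_of_lt hv0pos)]
  · -- Case B : two gcd values
    obtain ⟨pp, qq, hppqq, hVeq⟩ := Finset.card_eq_two.1 hVc
    obtain ⟨u, huV, hune⟩ : ∃ u, u ∈ V ∧ u ≠ v0 := by
      have hv0pq : v0 = pp ∨ v0 = qq := by
        have h1 := hv0V
        rw [hVeq] at h1
        simpa using h1
      rcases hv0pq with h | h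
      · exact ⟨qq, by rw [hVeq]; simp, by rw [h]; exact hppqq.symm⟩
      · exact ⟨pp, by rw [hVeq]; simp, by rw [h]; exact hppqq⟩
    have hVuv : ({u, v0} : Finset ℕ) = V := by
      apply Finset.eq_of_subset_of_card_le
      · intro w hw
        rcases Finset.mem_insert.1 hw with rfl | hw
        · exact huV
        · rw [Finset.mem_singleton.1 hw]; exact hv0V
      · rw [Finset.card_pair hune]; omega
    have hVmem : ∀ w ∈ V, w = u ∨ w = v0 := by
      intro w hw
      rw [← hVuv] at hw
      rcases Finset.mem_insert.1 hw with h | h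
      · exact Or.inl h
      · exact Or.inr (Finset.mem_singleton.1 h)
    obtain ⟨Tu, hTuP2, hGTu⟩ := Finset.mem_image.1 huV
    have hufacts := hVval u huV
    have hupos : (0:ℚ) < ((u:ℕ):ℚ)⁻¹ := by
      have : (0:ℚ) < (u:ℚ) := by exact_mod_cast hufacts.2.2.1
      positivity
    have hv0u : v0 ∣ u := hGTu ▸ hv0dvdGT Tu hTuP2
    set I := Mx.filter (fun y => u ∣ y) with hI
    have hIsub : I ⊆ Mx := Finset.filter_subset _ _
    have hTuI : Tu ⊆ I := by
      intro y hy
      rw [hI, Finset.mem_filter]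
      exact ⟨Finset.mem_powerset.1 (Finset.mem_filter.1 hTuP2).1 hy, hGTu ▸ hGdvd Tu y hy⟩
    have hI2 : 2 ≤ I.card := le_trans (Finset.mem_filter.1 hTuP2).2 (Finset.card_le_card hTuI)
    have hIne : I.Nonempty := Finset.card_pos.1 (by omega)
    have hGTI : ∀ T ∈ P2, G T = if T ⊆ I then u else v0 := by
      intro T hT
      have hGTV : G T = u ∨ G T = v0 := hVmem _ (Finset.mem_image_of_mem G hT)
      split_ifs with hTI
      · rcases hGTV with h | h
        · exact h
        · exfalso
          have huGT : u ∣ G T := by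
            rw [hdvdG]
            exact ⟨hufacts.2.1, fun y hy => (Finset.mem_filter.1 (hTI hy)).2⟩
          rw [h] at huGT
          exact hune (Nat.dvd_antisymm huGT hv0u)
      · rcases hGTV with h | h
        · exfalso
          obtain ⟨y, hyT, hyI⟩ := Finset.not_subset.1 hTI
          have hudy : u ∣ y := h ▸ hGdvd T y hyT
          exact hyI (Finset.mem_filter.2
            ⟨Finset.mem_powerset.1 (Finset.mem_filter.1 hT).1 hyT, hudy⟩)
        · exact h
    have hsetI : P2.filter (fun T => T ⊆ I) = I.powerset.filter (fun T => 2 ≤ T.card) := by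
      ext T
      rw [hP2]
      simp only [Finset.mem_filter, Finset.mem_powerset]
      constructor
      · rintro ⟨⟨_, hc⟩, hTI⟩; exact ⟨hTI, hc⟩
      · rintro ⟨hTI, hc⟩; exact ⟨⟨hTI.trans hIsub, hc⟩, hTI⟩
    have hQu : ∑ T ∈ P2.filter (fun T => T ⊆ I), ((-1:ℚ)^T.card * ((G T : ℕ):ℚ)⁻¹)
        = ((I.card:ℚ) - 1) * ((u:ℕ):ℚ)⁻¹ := by
      have hterm : ∀ T ∈ P2.filter (fun T => T ⊆ I), (-1:ℚ)^T.card * ((G T : ℕ):ℚ)⁻¹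
          = (-1:ℚ)^T.card * ((u:ℕ):ℚ)⁻¹ := fun T hT => by
        rw [hGTI T (Finset.mem_filter.1 hT).1, if_pos (Finset.mem_filter.1 hT).2]
      rw [Finset.sum_congr rfl hterm, ← Finset.sum_mul, hsetI, sum_P2_neg_one hIne]
    have hcoefv : ∑ T ∈ P2.filter (fun T => ¬ T ⊆ I), (-1:ℚ)^T.card
        = ((Mx.card:ℚ) - 1) - (((I.card:ℚ)) - 1) := by
      have htot : ∑ T ∈ P2, (-1:ℚ)^T.card = (Mx.card:ℚ) - 1 := by
        rw [hP2, sum_P2_neg_one hMxne]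
      have hspl := Finset.sum_filter_add_sum_filter_not P2 (fun T => T ⊆ I)
        (fun T => (-1:ℚ)^T.card)
      have hfirst : ∑ T ∈ P2.filter (fun T => T ⊆ I), (-1:ℚ)^T.card = (I.card:ℚ) - 1 := by
        rw [hsetI, sum_P2_neg_one hIne]
      linarith [hspl, htot, hfirst]
    have hQv : ∑ T ∈ P2.filter (fun T => ¬ T ⊆ I), ((-1:ℚ)^T.card * ((G T : ℕ):ℚ)⁻¹)
        = (((Mx.card:ℚ) - 1) - ((I.card:ℚ) - 1)) * ((v0:ℕ):ℚ)⁻¹ := by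
      have hterm : ∀ T ∈ P2.filter (fun T => ¬ T ⊆ I), (-1:ℚ)^T.card * ((G T : ℕ):ℚ)⁻¹
          = (-1:ℚ)^T.card * ((v0:ℕ):ℚ)⁻¹ := fun T hT => by
        rw [hGTI T (Finset.mem_filter.1 hT).1, if_neg (Finset.mem_filter.1 hT).2]
      rw [Finset.sum_congr rfl hterm, ← Finset.sum_mul, hcoefv]
    have hQ : ∑ T ∈ P2, (-1:ℚ)^T.card * ((G T : ℕ):ℚ)⁻¹
        = ((I.card:ℚ) - 1) * ((u:ℕ):ℚ)⁻¹
          + (((Mx.card:ℚ) - 1) - ((I.card:ℚ) - 1)) * ((v0:ℕ):ℚ)⁻¹ := by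
      rw [← Finset.sum_filter_add_sum_filter_not P2 (fun T => T ⊆ I), hQu, hQv]
    rw [hQ]
    -- bound the singleton sum
    have hYsplit : ∑ y ∈ Mx, ((y:ℕ):ℚ)⁻¹
        = ∑ y ∈ I, ((y:ℕ):ℚ)⁻¹ + ∑ y ∈ Mx.filter (fun y => ¬ u ∣ y), ((y:ℕ):ℚ)⁻¹ := by
      rw [hI, Finset.sum_filter_add_sum_filter_not]
    have hYI : ∑ y ∈ I, ((y:ℕ):ℚ)⁻¹ ≤ (I.card:ℚ) * (((u:ℕ):ℚ)⁻¹/2) := by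
      calc ∑ y ∈ I, ((y:ℕ):ℚ)⁻¹ ≤ ∑ _y ∈ I, ((u:ℕ):ℚ)⁻¹/2 := by
            apply Finset.sum_le_sum
            intro y hy
            have hyMx : y ∈ Mx := hIsub hy
            exact inv_le_half hufacts.2.2.1 ((Finset.mem_filter.1 hy).2)
              (hufacts.2.2.2.2 y hyMx) (hMxmem y hyMx).2.2.2
        _ = _ := by rw [Finset.sum_const, nsmul_eq_mul]
    have hYrest : ∑ y ∈ Mx.filter (fun y => ¬ u ∣ y), ((y:ℕ):ℚ)⁻¹
        ≤ ((Mx.filter (fun y => ¬ u ∣ y)).card:ℚ) * (((v0:ℕ):ℚ)⁻¹/2) := by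
      calc _ ≤ ∑ _y ∈ Mx.filter (fun y => ¬ u ∣ y), ((v0:ℕ):ℚ)⁻¹/2 := by
            apply Finset.sum_le_sum
            intro y hy
            have hyMx : y ∈ Mx := (Finset.mem_filter.1 hy).1
            exact inv_le_half hv0facts.2.2.1 (hv0y y hyMx)
              (hv0facts.2.2.2.2 y hyMx) (hMxmem y hyMx).2.2.2
        _ = _ := by rw [Finset.sum_const, nsmul_eq_mul]
    have hccn : I.card + (Mx.filter (fun y => ¬ u ∣ y)).card = Mx.card := by
      rw [hI]
      exact Finset.card_filter_add_card_filter_not (fun y => u ∣ y)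
    have hcc : (I.card:ℚ) + ((Mx.filter (fun y => ¬ u ∣ y)).card:ℚ) = (Mx.card:ℚ) := by
      exact_mod_cast hccn
    have hIq : (2:ℚ) ≤ (I.card:ℚ) := by exact_mod_cast hI2
    intro hcon
    rw [hYsplit] at hcon
    nlinarith [hYI, hYrest, hcc, hIq, hxinvpos, hupos, hv0pos,
      mul_nonneg (by linarith : (0:ℚ) ≤ (I.card:ℚ) - 2) (le_of_lt hupos),
      mul_nonneg (by linarith : (0:ℚ) ≤ ((Mx.filter (fun y => ¬ u ∣ y)).card:ℚ))
        (le_of_lt hv0pos)]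
  · -- Case C : V.card = 3, Mx.card = 3
    obtain ⟨a, b, c, hab, hac, hbc, hMeq⟩ := Finset.card_eq_three.1 hMc3
    have haMx : a ∈ Mx := by rw [hMeq]; simp
    have hbMx : b ∈ Mx := by rw [hMeq]; simp
    have hcMx : c ∈ Mx := by rw [hMeq]; simp
    have hgne : ∀ y ∈ Mx, ∀ z ∈ Mx, y ≠ z → Nat.gcd y z ≠ y := by
      intro y hy z hz hne he
      have hyz : y ∣ z := by rw [← he]; exact Nat.gcd_dvd_right y z
      exact hne (hanti y hy z hz hyz).symm
    have hGpair : ∀ y ∈ Mx, ∀ z ∈ Mx, G {y, z} = Nat.gcd y z := by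
      intro y hy z hz
      show (insert x ({y, z} : Finset ℕ)).gcd id = Nat.gcd y z
      rw [Finset.gcd_insert, Finset.gcd_insert]
      have h1 : ({z} : Finset ℕ).gcd id = z := by simp
      rw [h1]
      show Nat.gcd x (Nat.gcd y z) = Nat.gcd y z
      exact Nat.gcd_eq_right (dvd_trans (Nat.gcd_dvd_left y z) (hMxmem y hy).2.1)
    have hGtriple : G {a, b, c} = Nat.gcd a (Nat.gcd b c) := by
      show (insert x ({a, b, c} : Finset ℕ)).gcd id = Nat.gcd a (Nat.gcd b c)
      rw [Finset.gcd_insert, Finset.gcd_insert, Finset.gcd_insert]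
      have h1 : ({c} : Finset ℕ).gcd id = c := by simp
      rw [h1]
      show Nat.gcd x (Nat.gcd a (Nat.gcd b c)) = Nat.gcd a (Nat.gcd b c)
      exact Nat.gcd_eq_right (dvd_trans (Nat.gcd_dvd_left _ _) (hMxmem a haMx).2.1)
    have hpairP2 : ∀ y ∈ Mx, ∀ z ∈ Mx, y ≠ z → ({y, z} : Finset ℕ) ∈ P2 := by
      intro y hy z hz hne
      rw [hP2, Finset.mem_filter, Finset.mem_powerset]
      constructor
      · intro w hw
        rcases Finset.mem_insert.1 hw with rfl | hw
        · exact hy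
        · rw [Finset.mem_singleton.1 hw]; exact hz
      · rw [Finset.card_pair hne]
    have hpV : Nat.gcd a b ∈ V := by
      rw [← hGpair a haMx b hbMx]
      exact Finset.mem_image_of_mem G (hpairP2 a haMx b hbMx hab)
    have hqV : Nat.gcd a c ∈ V := by
      rw [← hGpair a haMx c hcMx]
      exact Finset.mem_image_of_mem G (hpairP2 a haMx c hcMx hac)
    have hsV : Nat.gcd b c ∈ V := by
      rw [← hGpair b hbMx c hcMx]
      exact Finset.mem_image_of_mem G (hpairP2 b hbMx c hcMx hbc)
    have htV : Nat.gcd a (Nat.gcd b c) ∈ V := by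
      rw [← hGtriple, ← hMeq]
      exact hv0V
    have htda : Nat.gcd a (Nat.gcd b c) ∣ a := Nat.gcd_dvd_left _ _
    have htdb : Nat.gcd a (Nat.gcd b c) ∣ b :=
      dvd_trans (Nat.gcd_dvd_right _ _) (Nat.gcd_dvd_left b c)
    have htdc : Nat.gcd a (Nat.gcd b c) ∣ c :=
      dvd_trans (Nat.gcd_dvd_right _ _) (Nat.gcd_dvd_right b c)
    have htp : Nat.gcd a (Nat.gcd b c) = Nat.gcd a b
        ∨ Nat.gcd a (Nat.gcd b c) = Nat.gcd a c
        ∨ Nat.gcd a (Nat.gcd b c) = Nat.gcd b c := by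
      by_cases h1 : Nat.gcd a b = Nat.gcd a c
      · left
        apply Nat.dvd_antisymm (Nat.dvd_gcd htda htdb)
        apply Nat.dvd_gcd (Nat.gcd_dvd_left a b)
        exact Nat.dvd_gcd (Nat.gcd_dvd_right a b) (h1 ▸ Nat.gcd_dvd_right a c)
      by_cases h2 : Nat.gcd a b = Nat.gcd b c
      · left
        apply Nat.dvd_antisymm (Nat.dvd_gcd htda htdb)
        apply Nat.dvd_gcd (Nat.gcd_dvd_left a b)
        rw [h2]
      by_cases h3 : Nat.gcd a c = Nat.gcd b c
      · right; left
        apply Nat.dvd_antisymm (Nat.dvd_gcd htda htdc)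
        apply Nat.dvd_gcd (Nat.gcd_dvd_left a c)
        rw [h3]
      · have hsub : ({Nat.gcd a b, Nat.gcd a c, Nat.gcd b c} : Finset ℕ) ⊆ V := by
          intro w hw
          rcases Finset.mem_insert.1 hw with rfl | hw
          · exact hpV
          rcases Finset.mem_insert.1 hw with rfl | hw
          · exact hqV
          · rw [Finset.mem_singleton.1 hw]; exact hsV
        have hc3 : ({Nat.gcd a b, Nat.gcd a c, Nat.gcd b c} : Finset ℕ).card = 3 := by
          rw [Finset.card_insert_of_notMem (by simp [h1, h2]), Finset.card_pair h3]
        have hVeq3 : ({Nat.gcd a b, Nat.gcd a c, Nat.gcd b c} : Finset ℕ) = V :=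
          Finset.eq_of_subset_of_card_le hsub (by omega)
        have h4 := htV
        rw [← hVeq3] at h4
        simp only [Finset.mem_insert, Finset.mem_singleton] at h4
        exact h4
    have hYC : ∑ y ∈ Mx, ((y:ℕ):ℚ)⁻¹ = ((a:ℕ):ℚ)⁻¹ + ((b:ℕ):ℚ)⁻¹ + ((c:ℕ):ℚ)⁻¹ := by
      rw [hMeq, Finset.sum_insert (by simp [hab, hac]), Finset.sum_pair hbc]
      ring
    have hQC : ∑ T ∈ P2, (-1:ℚ)^T.card * ((G T : ℕ):ℚ)⁻¹
        = ((Nat.gcd a b:ℕ):ℚ)⁻¹ + ((Nat.gcd a c:ℕ):ℚ)⁻¹ + ((Nat.gcd b c:ℕ):ℚ)⁻¹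
          - ((Nat.gcd a (Nat.gcd b c):ℕ):ℚ)⁻¹ := by
      rw [hP2, hMeq, Finset.sum_filter]
      rw [show ({a, b, c} : Finset ℕ) = insert a (insert b {c}) from rfl,
          show ({c} : Finset ℕ) = insert c ∅ from rfl]
      rw [Finset.sum_powerset_insert (by simp [hab, hac] : a ∉ insert b (insert c ∅)) _]
      simp only [Finset.sum_powerset_insert (by simp [hbc] : b ∉ insert c ∅)]
      simp only [Finset.sum_powerset_insert (Finset.notMem_empty c)]
      simp only [Finset.powerset_empty, Finset.sum_singleton]
      have he1 : ∀ z : ℕ, insert z (∅ : Finset ℕ) = {z} := fun z => rfl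
      simp only [he1]
      rw [Finset.card_empty, Finset.card_singleton, Finset.card_singleton,
        Finset.card_pair hbc, Finset.card_singleton,
        Finset.card_pair hac, Finset.card_pair hab,
        show (insert a ({b, c} : Finset ℕ)).card = 3 by
          rw [Finset.card_insert_of_notMem (by simp [hab, hac]), Finset.card_pair hbc]]
      norm_num
      rw [hGpair a haMx b hbMx, hGpair a haMx c hcMx, hGpair b hbMx c hcMx, hGtriple]
      ring
    rw [hYC, hQC]
    rcases htp with h | h | h
    · exact caseC x a b c _ hxpos (hMxmem a haMx).2.2.2 (hMxmem b hbMx).2.2.2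
        (hMxmem c hcMx).2.2.2 (hgne a haMx c hcMx hac) (hgne b hbMx c hcMx hbc)
        (by rw [Nat.gcd_comm]; exact hgne c hcMx b hbMx (Ne.symm hbc))
        (by rw [h]; ring)
    · exact caseC x a c b _ hxpos (hMxmem a haMx).2.2.2 (hMxmem c hcMx).2.2.2
        (hMxmem b hbMx).2.2.2 (hgne a haMx b hbMx hab) (hgne c hcMx b hbMx (Ne.symm hbc))
        (by rw [Nat.gcd_comm]; exact hgne b hbMx c hcMx hbc)
        (by rw [h, Nat.gcd_comm c b]; ring)
    · exact caseC x b c a _ hxpos (hMxmem b hbMx).2.2.2 (hMxmem c hcMx).2.2.2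
        (hMxmem a haMx).2.2.2 (hgne b hbMx a haMx (Ne.symm hab)) (hgne c hcMx a haMx (Ne.symm hac))
        (by rw [Nat.gcd_comm]; exact hgne a haMx c hcMx hac)
        (by rw [h, Nat.gcd_comm b a, Nat.gcd_comm c a]; ring)

/-- If `S` is a gcd-closed set of distinct positive integers with exactly 7
elements, then the LCM matrix `[S]` is invertible. -/
theorem lcmMatrix_gcdClosed_card_eq_seven_isUnit
    (S : Finset ℕ) (hpos : ∀ a ∈ S, 0 < a)
    (hgcd : ∀ a ∈ S, ∀ b ∈ S, Nat.gcd a b ∈ S)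
    (hcard : S.card = 7) :
    IsUnit (Matrix.of fun i j : ↥S => (Nat.lcm (i : ℕ) (j : ℕ) : ℚ)) := by
  classical
  set E : Matrix ↥S ↥S ℚ := Matrix.of (fun i j => if (j:ℕ) ∣ (i:ℕ) then 1 else 0) with hE
  have htri : E.BlockTriangular OrderDual.toDual := by
    intro i j hij
    simp only [hE, Matrix.of_apply, ite_eq_right_iff]
    intro hdvd
    exact absurd (Nat.le_of_dvd (hpos _ i.2) hdvd) (not_le.2 hij)
  have hEd : E.det = 1 := by
    rw [Matrix.det_of_lowerTriangular E htri]
    refine Finset.prod_eq_one fun i _ => ?_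
    simp [hE]
  have hEu : IsUnit E := by
    rw [Matrix.isUnit_iff_isUnit_det, hEd]; exact isUnit_one
  set α : ↥S → ℚ := (E⁻¹).mulVec (fun i => ((i:ℕ):ℚ)⁻¹) with hα
  have hEinv : E * E⁻¹ = 1 := Matrix.mul_nonsing_inv E (by rw [hEd]; exact isUnit_one)
  have hsum : ∀ m ∈ S, (∑ k : ↥S, if (k:ℕ) ∣ m then α k else 0) = (m:ℚ)⁻¹ := by
    intro m hm
    have h1 : E.mulVec α = fun i : ↥S => ((i:ℕ):ℚ)⁻¹ := by
      rw [hα, Matrix.mulVec_mulVec, hEinv, Matrix.one_mulVec]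
    have h2 := congrFun h1 ⟨m, hm⟩
    rw [Matrix.mulVec, dotProduct] at h2
    simpa only [hE, Matrix.of_apply, ite_mul, one_mul, zero_mul] using h2
  have key : ∀ k : ↥S, α k ≠ 0 := fun k =>
    key_aux S hpos hgcd hcard α (fun m hm _ => hsum m hm) k.1 k.2
  have hM' : (Matrix.of fun i j : ↥S => ((Nat.gcd (i:ℕ) (j:ℕ) : ℕ):ℚ)⁻¹)
      = E * Matrix.diagonal α * E.transpose := by
    ext i j
    rw [Matrix.mul_apply]
    have : ∀ k : ↥S, (E * Matrix.diagonal α) i k * E.transpose k j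
        = if (k:ℕ) ∣ Nat.gcd (i:ℕ) (j:ℕ) then α k else 0 := by
      intro k
      rw [Matrix.mul_diagonal, Matrix.transpose_apply]
      simp only [hE, Matrix.of_apply]
      by_cases h1 : (k:ℕ) ∣ (i:ℕ) <;> by_cases h2 : (k:ℕ) ∣ (j:ℕ) <;>
        simp [h1, h2, Nat.dvd_gcd_iff]
    rw [Finset.sum_congr rfl fun k _ => this k]
    exact (hsum _ (hgcd _ i.2 _ j.2)).symm
  set D : Matrix ↥S ↥S ℚ := Matrix.diagonal (fun i => ((i:ℕ):ℚ)) with hD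
  have hfact : (Matrix.of fun i j : ↥S => (Nat.lcm (i : ℕ) (j : ℕ) : ℚ))
      = D * (E * Matrix.diagonal α * E.transpose) * D := by
    rw [← hM']
    ext i j
    rw [Matrix.mul_diagonal, Matrix.diagonal_mul]
    simp only [Matrix.of_apply]
    have hg : (Nat.gcd (i:ℕ) (j:ℕ) : ℚ) ≠ 0 :=
      Nat.cast_ne_zero.2 (Nat.gcd_ne_zero_left (hpos _ i.2).ne')
    have hml : ((Nat.gcd (i:ℕ) (j:ℕ) : ℚ)) * (Nat.lcm (i:ℕ) (j:ℕ) : ℚ) = (i:ℕ) * (j:ℕ) := by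
      rw [← Nat.cast_mul, ← Nat.cast_mul, Nat.gcd_mul_lcm]
    field_simp
    linarith [hml]
  rw [hfact]
  have hDu : IsUnit D := by
    rw [Matrix.isUnit_iff_isUnit_det, hD, Matrix.det_diagonal, isUnit_iff_ne_zero]
    exact Finset.prod_ne_zero_iff.2 fun k _ => Nat.cast_ne_zero.2 (hpos _ k.2).ne'
  have hAu : IsUnit (Matrix.diagonal α) := by
    rw [Matrix.isUnit_iff_isUnit_det, Matrix.det_diagonal, isUnit_iff_ne_zero]
    exact Finset.prod_ne_zero_iff.2 fun k _ => key k
  have hEtu : IsUnit E.transpose := by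
    rw [Matrix.isUnit_iff_isUnit_det, Matrix.det_transpose, hEd]; exact isUnit_one
  exact ((hDu.mul ((hEu.mul hAu).mul hEtu)).mul hDu)
end

section
/- (Hong's counterexample to the Bourque–Ligh conjecture) The set S = {1, 2, 3, 5, 36, 230, 825, 227700} of 8 distinct positive integers is gcd-closed, yet the 8 × 8 LCM matrix [S] with (i,j) entry lcm(x_i, x_j) is singular, i.e., its determinant is 0. -/
/-- Hong's set `{1, 2, 3, 5, 36, 230, 825, 227700}`. -/
def hongSet : Fin 8 → ℕ := ![1, 2, 3, 5, 36, 230, 825, 227700]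

private lemma hv5 : (![1, 2, 3, 5, 36, 230, 825, 227700] : Fin 8 → ℕ) 5 = 230 := rfl
private lemma hv6 : (![1, 2, 3, 5, 36, 230, 825, 227700] : Fin 8 → ℕ) 6 = 825 := rfl
private lemma hv7 : (![1, 2, 3, 5, 36, 230, 825, 227700] : Fin 8 → ℕ) 7 = 227700 := rfl
private lemma hq7 : (![(-227700:ℚ), 113850, 75900, 45540, -6325, -990, -276, 1]) 7 = 1 := rfl

/-- Hong's counterexample to the Bourque–Ligh conjecture: the set
`S = {1, 2, 3, 5, 36, 230, 825, 227700}` consists of 8 distinct positive integers, is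
gcd-closed, yet the 8 × 8 LCM matrix `[S]` is singular (its determinant is `0`). -/
theorem hong_counterexample :
    Function.Injective hongSet ∧ (∀ i, 0 < hongSet i) ∧
    (∀ i j : Fin 8, ∃ k : Fin 8, hongSet k = Nat.gcd (hongSet i) (hongSet j)) ∧
    (Matrix.of fun i j : Fin 8 => (Nat.lcm (hongSet i) (hongSet j) : ℚ)).det = 0 := by
  refine ⟨by decide, by decide, by decide, ?_⟩
  rw [← Matrix.exists_mulVec_eq_zero_iff]
  refine ⟨![-227700, 113850, 75900, 45540, -6325, -990, -276, 1], ?_, ?_⟩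
  · intro h
    have := congrFun h 7
    rw [hq7] at this
    simp at this
  · funext i
    fin_cases i <;>
      norm_num [Matrix.mulVec, dotProduct, Fin.sum_univ_succ, hongSet,
        hv5, hv6, hv7]
end

section
/- (Haukkanen–Wang–Sillanpää counterexample to the Bourque–Ligh conjecture) The set S = {1, 2, 3, 4, 5, 6, 10, 45, 180} of 9 distinct positive integers is gcd-closed, yet the 9 × 9 LCM matrix [S] with (i,j) entry lcm(x_i, x_j) is singular, i.e., its determinant is 0. -/
/-- The Haukkanen–Wang–Sillanpää set `{1, 2, 3, 4, 5, 6, 10, 45, 180}`. -/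
def hwsSet : Fin 9 → ℕ := ![1, 2, 3, 4, 5, 6, 10, 45, 180]

/-- Haukkanen–Wang–Sillanpää counterexample to the Bourque–Ligh conjecture:
the set `S = {1, 2, 3, 4, 5, 6, 10, 45, 180}` consists of 9 distinct positive integers, is
gcd-closed, yet the 9 × 9 LCM matrix `[S]` is singular (its determinant is `0`). -/
theorem hws_counterexample :
    Function.Injective hwsSet ∧ (∀ i, 0 < hwsSet i) ∧
    (∀ i j : Fin 9, ∃ k : Fin 9, hwsSet k = Nat.gcd (hwsSet i) (hwsSet j)) ∧
    (Matrix.of fun i j : Fin 9 => (Nat.lcm (hwsSet i) (hwsSet j) : ℚ)).det = 0 := by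
  refine ⟨by decide, by decide, by decide, ?_⟩
  rw [← Matrix.exists_mulVec_eq_zero_iff]
  refine ⟨![-180, 180, 60, -45, 36, -30, -18, -4, 1], ?_, ?_⟩
  · intro h
    have := congrFun h 8
    rw [show (![-180, 180, 60, -45, 36, -30, -18, -4, 1] : Fin 9 → ℚ) 8 = 1 from rfl] at this
    simp at this
  · funext i
    fin_cases i <;>
      simp [Matrix.mulVec, dotProduct, Fin.sum_univ_succ, hwsSet,
        show (![1,2,3,4,5,6,10,45,180] : Fin 9 → ℕ) 5 = 6 from rfl,
        show (![1,2,3,4,5,6,10,45,180] : Fin 9 → ℕ) 6 = 10 from rfl,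
        show (![1,2,3,4,5,6,10,45,180] : Fin 9 → ℕ) 7 = 45 from rfl,
        show (![1,2,3,4,5,6,10,45,180] : Fin 9 → ℕ) 8 = 180 from rfl] <;>
      norm_num [Nat.lcm]
end
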